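/- arXiv:0705.3673 — 14 statements merged into one kernel-verified Lean document; each statement's English description precedes it below -/
import Mathlib

section
/- Let x, y, σ be real numbers with 0 < x < y, and suppose either 0 ≤ σ < 1 or σ ≥ 2. Then (y^σ − x^σ)/(y − x) ≤ (σ/2)(y^{σ−1} + x^{σ−1}). -/
open Real Set

/-- Bernoulli-type inequality: for `p ≥ 1` or `-1 ≤ p < 0` and `0 < x ≤ t`,
`t^p - x^p ≤ p * t^(p-1) * (t - x)`. -/
lemma riesz_elem_key (p x t : ℝ) (hx : 0 < x) (hxt : x ≤ t)
    (hp : 1 ≤ p ∨ (-1 ≤ p ∧ p < 0)) :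
    t ^ p - x ^ p ≤ p * t ^ (p - 1) * (t - x) := by
  have ht : 0 < t := hx.trans_le hxt
  set s : ℝ := x / t - 1 with hs_def
  clear_value s
  have hs1 : -1 < s := by
    have : 0 < x / t := div_pos hx ht
    linarith
  have hs0 : s ≤ 0 := by
    have : x / t ≤ 1 := (div_le_one ht).2 hxt
    linarith
  have h1s : 1 + s = x / t := by rw [hs_def]; ring
  -- Bernoulli: (1+s)^p ≥ 1 + p*s
  have hbern : 1 + p * s ≤ (1 + s) ^ p := by
    rcases hp with hp | ⟨hp1, hp2⟩
    · exact one_add_mul_self_le_rpow_one_add hs1.le hp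
    · -- negative exponent case
      set q : ℝ := -p with hq_def
      clear_value q
      have h1spos : (0:ℝ) < 1 + s := by linarith
      have hq0 : 0 ≤ q := by rw [hq_def]; linarith
      have hq1 : q ≤ 1 := by rw [hq_def]; linarith
      have hQ : (1 + s) ^ q ≤ 1 + q * s :=
        rpow_one_add_le_one_add_mul_self hs1.le hq0 hq1
      have h1qs : 0 < 1 + q * s := by nlinarith
      have hpow_pos : 0 < (1 + s) ^ q := Real.rpow_pos_of_pos h1spos q
      have hps : p = -q := by rw [hq_def]; ring
      rw [hps, Real.rpow_neg h1spos.le]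
      have h2 : (1 + q * s)⁻¹ ≤ ((1 + s) ^ q)⁻¹ := by
        exact inv_anti₀ hpow_pos hQ
      have h3 : 1 + (-q) * s ≤ (1 + q * s)⁻¹ := by
        rw [← one_div, le_div_iff₀ h1qs]
        nlinarith [sq_nonneg (q * s)]
      linarith
  -- transfer to x, t
  have hxt_pow : (x / t) ^ p = x ^ p / t ^ p := Real.div_rpow hx.le ht.le p
  have htp : (0:ℝ) < t ^ p := Real.rpow_pos_of_pos ht p
  have hmul : (1 + p * s) * t ^ p ≤ (1 + s) ^ p * t ^ p :=
    mul_le_mul_of_nonneg_right hbern htp.le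
  have hR : (1 + s) ^ p * t ^ p = x ^ p := by
    rw [h1s, hxt_pow, div_mul_cancel₀]
    exact htp.ne'
  have htp1 : t ^ (p - 1) * t = t ^ p := by
    rw [Real.rpow_sub_one ht.ne', div_mul_cancel₀]
    exact ht.ne'
  have hL : (1 + p * s) * t ^ p = t ^ p + p * t ^ (p - 1) * (x - t) := by
    have : s * t = x - t := by
      rw [hs_def, sub_mul, div_mul_cancel₀ x ht.ne']; ring
    calc (1 + p * s) * t ^ p = t ^ p + p * s * (t ^ (p-1) * t) := by rw [htp1]; ring
      _ = t ^ p + p * t ^ (p - 1) * (s * t) := by ring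
      _ = t ^ p + p * t ^ (p - 1) * (x - t) := by rw [this]
  rw [hL, hR] at hmul
  linarith

/-- Outer cases of the elementary lemma: for `0 < x < y` and `0 ≤ σ < 1` or `σ ≥ 2`,
`(y^σ - x^σ)/(y - x) ≤ (σ/2) (y^(σ-1) + x^(σ-1))` (real powers). -/
theorem riesz_elem_lemma_outer (x y σ : ℝ) (hx : 0 < x) (hxy : x < y)
    (hσ : (0 ≤ σ ∧ σ < 1) ∨ 2 ≤ σ) :
    (y ^ σ - x ^ σ) / (y - x) ≤ (σ / 2) * (y ^ (σ - 1) + x ^ (σ - 1)) := by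
  have hy : 0 < y := hx.trans hxy
  have hyx : 0 < y - x := sub_pos.2 hxy
  rcases eq_or_lt_of_le (by rcases hσ with ⟨h, _⟩ | h <;> linarith : (0:ℝ) ≤ σ) with hσ0 | hσpos
  · simp [← hσ0, Real.rpow_zero]
  -- main case : σ > 0
  have hp : 1 ≤ σ - 1 ∨ (-1 ≤ σ - 1 ∧ σ - 1 < 0) := by
    rcases hσ with ⟨h1, h2⟩ | h
    · exact Or.inr ⟨by linarith, by linarith⟩
    · exact Or.inl (by linarith)
  set f : ℝ → ℝ := fun t => σ / 2 * ((t ^ (σ - 1) + x ^ (σ - 1)) * (t - x)) - (t ^ σ - x ^ σ)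
    with hf_def
  have hderiv : ∀ t ∈ Ici x, HasDerivAt f
      (σ / 2 * ((σ - 1) * t ^ (σ - 1 - 1) * (t - x) + (t ^ (σ - 1) + x ^ (σ - 1)) * 1)
        - σ * t ^ (σ - 1)) t := by
    intro t ht
    have htpos : 0 < t := lt_of_lt_of_le hx ht
    have h1 : HasDerivAt (fun u : ℝ => u ^ (σ - 1)) ((σ - 1) * t ^ (σ - 1 - 1)) t :=
      Real.hasDerivAt_rpow_const (Or.inl htpos.ne')
    have h2 : HasDerivAt (fun u : ℝ => u ^ σ) (σ * t ^ (σ - 1)) t :=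
      Real.hasDerivAt_rpow_const (Or.inl htpos.ne')
    exact (((h1.add_const _).mul ((hasDerivAt_id t).sub_const x)).const_mul (σ / 2)).sub
      (h2.sub_const _)
  have hmono : MonotoneOn f (Icc x y) := by
    have hdiff : DifferentiableOn ℝ f (interior (Icc x y)) := by
      intro t ht
      rw [interior_Icc] at ht
      exact (hderiv t (mem_Ici.2 ht.1.le)).differentiableAt.differentiableWithinAt
    apply monotoneOn_of_deriv_nonneg (convex_Icc x y)
      (fun t ht => ((hderiv t (Icc_subset_Ici_self ht)).continuousAt).continuousWithinAt) hdiff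
    · intro t ht
      rw [interior_Icc] at ht
      have htx : x ≤ t := ht.1.le
      have htpos : 0 < t := hx.trans ht.1
      rw [(hderiv t (mem_Ici.2 htx)).deriv]
      have hkey : t ^ (σ - 1) - x ^ (σ - 1) ≤ (σ - 1) * t ^ (σ - 1 - 1) * (t - x) :=
        riesz_elem_key (σ - 1) x t hx htx hp
      nlinarith [hσpos.le]
  have hfx : f x = 0 := by simp [hf_def]
  have hfy : 0 ≤ f y := by
    rw [← hfx]
    exact hmono (left_mem_Icc.2 hxy.le) (right_mem_Icc.2 hxy.le) hxy.le
  rw [div_le_iff₀ hyx]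
  simp only [hf_def] at hfy
  nlinarith
end

section
/- Let λ : ℕ → ℝ (indexed from 1) be nondecreasing with λ_k → ∞, let σ > 1, let c > 0 and a > 0 be real. Suppose that for all z ≥ a one has R_{σ−1}(z) ≥ (c/z) · R_σ(z). Then the function z ↦ R_σ(z)/z^{cσ} is nondecreasing on [a, ∞). -/
open Real Filter

/-- Riesz mean of order `σ` of the sequence `λ_1, λ_2, …` (here `lam (k+1)` is `λ_{k+1}`):
`R_σ(z) := Σ_{k ≥ 1} (z - λ_k)_+ ^ σ`. -/
noncomputable def rieszMean (lam : ℕ → ℝ) (σ z : ℝ) : ℝ :=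
  ∑' k : ℕ, (max (z - lam (k + 1)) 0) ^ σ

/-- The eigenvalue counting function `N(z) := #{k ≥ 1 : λ_k < z}`, as a real number. -/
noncomputable def countingFn (lam : ℕ → ℝ) (z : ℝ) : ℝ :=
  Nat.card {k : ℕ // 1 ≤ k ∧ lam k < z}

/-- The average `λ̄_j := (1/j) Σ_{ℓ=1}^j λ_ℓ` of the first `j` terms. -/
noncomputable def eigAvg (lam : ℕ → ℝ) (j : ℕ) : ℝ :=
  (∑ ℓ ∈ Finset.Icc 1 j, lam ℓ) / j

lemma maxpow_hasDerivAt (p : ℝ) (hp : 1 < p) (z : ℝ) :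
    HasDerivAt (fun x : ℝ => max x 0 ^ p) (p * max z 0 ^ (p - 1)) z := by
  rcases lt_trichotomy z 0 with hz | hz | hz
  · have h0 : (fun x : ℝ => max x 0 ^ p) =ᶠ[nhds z] fun _ => (0:ℝ) ^ p := by
      filter_upwards [eventually_lt_nhds hz] with x hx
      rw [max_eq_right hx.le]
    have := (hasDerivAt_const z ((0:ℝ) ^ p)).congr_of_eventuallyEq h0
    rw [max_eq_right hz.le, Real.zero_rpow (by linarith), mul_zero]
    exact this
  · subst hz
    rw [max_self, Real.zero_rpow (by linarith), mul_zero]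
    rw [hasDerivAt_iff_tendsto_slope]
    have hb : ∀ x : ℝ, ‖slope (fun x : ℝ => max x 0 ^ p) 0 x‖ ≤ |x| ^ (p - 1) := by
      intro x
      rcases le_or_gt x 0 with hx | hx
      · simp [slope, max_eq_right hx, Real.zero_rpow (by linarith : p ≠ 0)]
        positivity
      · rw [slope_def_field]
        rw [max_eq_left hx.le, max_eq_right le_rfl, Real.zero_rpow (by linarith : p ≠ 0)]
        rw [sub_zero, sub_zero, div_eq_mul_inv, ← Real.rpow_neg_one x,
          ← Real.rpow_add hx, abs_of_pos hx]
        rw [Real.norm_eq_abs, abs_of_nonneg (Real.rpow_nonneg hx.le _)]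
        ring_nf
        exact le_rfl
    have hlim : Tendsto (fun x : ℝ => |x| ^ (p - 1)) (nhdsWithin 0 {0}ᶜ) (nhds 0) := by
      have h1 : Tendsto (fun x : ℝ => |x|) (nhds (0:ℝ)) (nhds (0:ℝ)) := by
        simpa using continuous_abs.tendsto (0:ℝ)
      have h2 : Tendsto (fun y : ℝ => y ^ (p - 1)) (nhds (0:ℝ)) (nhds ((0:ℝ) ^ (p - 1))) :=
        (Real.continuousAt_rpow_const 0 (p - 1) (Or.inr (by linarith))).tendsto
      have := h2.comp h1
      rw [Real.zero_rpow (by linarith : p - 1 ≠ 0)] at this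
      exact this.mono_left nhdsWithin_le_nhds
    exact squeeze_zero_norm hb hlim
  · have h0 : (fun x : ℝ => max x 0 ^ p) =ᶠ[nhds z] fun x => x ^ p := by
      filter_upwards [eventually_gt_nhds hz] with x hx
      rw [max_eq_left hx.le]
    have := (Real.hasDerivAt_rpow_const (Or.inl hz.ne')).congr_of_eventuallyEq h0
    rwa [max_eq_left hz.le]

lemma maxpow_hasDerivAt' (p : ℝ) (hp : 1 < p) (t z : ℝ) :
    HasDerivAt (fun x : ℝ => max (x - t) 0 ^ p) (p * max (z - t) 0 ^ (p - 1)) z := by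
  have h1 : HasDerivAt (fun x : ℝ => x - t) 1 z := (hasDerivAt_id z).sub_const t
  have := (maxpow_hasDerivAt p hp (z - t)).comp z h1
  simpa [Function.comp_def] using this

/-- If the difference inequality `R_{σ-1}(z) ≥ (c/z) R_σ(z)` holds for all `z ≥ a`,
then `z ↦ R_σ(z) / z^(cσ)` is nondecreasing on `[a, ∞)`. -/
theorem rieszMean_div_pow_monotone (lam : ℕ → ℝ)
    (hmono : ∀ k : ℕ, 1 ≤ k → lam k ≤ lam (k + 1))
    (htend : Tendsto lam atTop atTop)
    (σ : ℝ) (hσ : 1 < σ) (c : ℝ) (hc : 0 < c) (a : ℝ) (ha : 0 < a)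
    (hdiff : ∀ z : ℝ, a ≤ z → rieszMean lam (σ - 1) z ≥ (c / z) * rieszMean lam σ z) :
    MonotoneOn (fun z => rieszMean lam σ z / z ^ (c * σ)) (Set.Ici a) := by
  intro x hx y hy hxy
  simp only
  obtain ⟨N, hN⟩ := eventually_atTop.mp (htend.eventually_ge_atTop y)
  -- on [a, y], the Riesz means are finite sums over `range N`
  have key : ∀ p : ℝ, p ≠ 0 → ∀ z ∈ Set.Icc a y,
      rieszMean lam p z = ∑ k ∈ Finset.range N, max (z - lam (k + 1)) 0 ^ p := by
    intro p hp z hz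
    apply tsum_eq_sum
    intro k hk
    have hkN : N ≤ k + 1 := le_trans (Nat.le_of_not_lt fun h => hk (Finset.mem_range.mpr h)) (Nat.le_succ k)
    have h1 : y ≤ lam (k + 1) := hN (k + 1) hkN
    have h2 : z - lam (k + 1) ≤ 0 := by linarith [hz.2]
    rw [max_eq_right h2, Real.zero_rpow hp]
  set F : ℝ → ℝ := fun z => ∑ k ∈ Finset.range N, max (z - lam (k + 1)) 0 ^ σ with hFdef
  set S : ℝ → ℝ := fun z => ∑ k ∈ Finset.range N, max (z - lam (k + 1)) 0 ^ (σ - 1) with hSdef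
  set G : ℝ → ℝ := fun z => F z / z ^ (c * σ) with hGdef
  have hσ0 : σ ≠ 0 := by linarith
  have hσ10 : σ - 1 ≠ 0 := by linarith
  -- derivative of G at any z > 0
  have hGd : ∀ z : ℝ, 0 < z → HasDerivAt G
      ((σ * S z * z ^ (c * σ) - F z * (c * σ * z ^ (c * σ - 1))) / (z ^ (c * σ)) ^ 2) z := by
    intro z hz
    have hFd : HasDerivAt F (σ * S z) z := by
      have := HasDerivAt.sum (u := Finset.range N)
        (A := fun k x => max (x - lam (k + 1)) 0 ^ σ)
        (A' := fun k => σ * max (z - lam (k + 1)) 0 ^ (σ - 1))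
        (fun k _ => maxpow_hasDerivAt' σ hσ (lam (k + 1)) z)
      simpa [hFdef, hSdef, Finset.mul_sum, Finset.sum_fn] using this
    have hpow : HasDerivAt (fun x : ℝ => x ^ (c * σ)) (c * σ * z ^ (c * σ - 1)) z :=
      Real.hasDerivAt_rpow_const (Or.inl hz.ne')
    exact hFd.div hpow (Real.rpow_pos_of_pos hz _).ne'
  -- G is monotone on [a, y]
  have hay : a ≤ y := hy
  have hGm : MonotoneOn G (Set.Icc a y) := by
    apply monotoneOn_of_deriv_nonneg (convex_Icc a y)
    · intro z hz
      exact ((hGd z (lt_of_lt_of_le ha hz.1)).continuousAt).continuousWithinAt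
    · intro z hz
      rw [interior_Icc] at hz
      exact ((hGd z (lt_of_lt_of_le ha hz.1.le)).differentiableAt).differentiableWithinAt
    · intro z hz
      rw [interior_Icc] at hz
      have hza : a ≤ z := hz.1.le
      have hz0 : 0 < z := lt_of_lt_of_le ha hza
      rw [(hGd z hz0).deriv]
      apply div_nonneg _ (sq_nonneg _)
      -- difference inequality in terms of F and S
      have hzIcc : z ∈ Set.Icc a y := ⟨hza, hz.2.le⟩
      have hineq : S z ≥ (c / z) * F z := by
        have := hdiff z hza
        rwa [key σ hσ0 z hzIcc, key (σ - 1) hσ10 z hzIcc] at this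
      have hFnn : 0 ≤ F z := Finset.sum_nonneg fun k _ =>
        Real.rpow_nonneg (le_max_right _ _) _
      have hzpow : (0:ℝ) < z ^ (c * σ) := Real.rpow_pos_of_pos hz0 _
      have hpowsub : z ^ (c * σ - 1) = z ^ (c * σ) / z := by
        rw [Real.rpow_sub hz0, Real.rpow_one]
      have h1 : σ * ((c / z) * F z) * z ^ (c * σ) ≤ σ * S z * z ^ (c * σ) := by
        apply mul_le_mul_of_nonneg_right _ hzpow.le
        apply mul_le_mul_of_nonneg_left hineq (by linarith)
      have h2 : F z * (c * σ * z ^ (c * σ - 1)) = σ * ((c / z) * F z) * z ^ (c * σ) := by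
        rw [hpowsub]
        field_simp
      linarith
  -- conclude
  have hxIcc : x ∈ Set.Icc a y := ⟨hx, hxy⟩
  have hyIcc : y ∈ Set.Icc a y := ⟨hay, le_rfl⟩
  rw [key σ hσ0 x hxIcc, key σ hσ0 y hyIcc]
  exact hGm hxIcc hyIcc hxy
end

section
/- Let d be a positive integer, let σ ≥ 2 be real, and let λ : ℕ → ℝ (indexed from 1) be nondecreasing with λ_1 > 0 and λ_k → ∞. Suppose the function z ↦ R_σ(z)/z^{σ + d/2} is nondecreasing on [λ_1, ∞). Then for every z ≥ (1 + 2σ/d)·λ_1, R_σ(z) ≥ (2σ/d)^σ · λ_1^{−d/2} · (z/(1 + 2σ/d))^{σ + d/2}. -/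
open Real Filter

/-- Lower bound of Corollary 2: if `z ↦ R_σ(z)/z^(σ+d/2)` is nondecreasing on `[λ_1, ∞)`,
then for `z ≥ (1 + 2σ/d) λ_1`,
`R_σ(z) ≥ (2σ/d)^σ λ_1^(-d/2) (z/(1 + 2σ/d))^(σ+d/2)`. -/
theorem rieszMean_lower_bound_of_monotone (d : ℕ) (hd : 0 < d)
    (σ : ℝ) (hσ : 2 ≤ σ) (lam : ℕ → ℝ)
    (hmono : ∀ k : ℕ, 1 ≤ k → lam k ≤ lam (k + 1))
    (hpos : 0 < lam 1)
    (htend : Tendsto lam atTop atTop)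
    (hmonoR : MonotoneOn (fun z => rieszMean lam σ z / z ^ (σ + (d : ℝ) / 2))
      (Set.Ici (lam 1))) :
    ∀ z : ℝ, (1 + 2 * σ / (d : ℝ)) * lam 1 ≤ z →
      rieszMean lam σ z ≥
        (2 * σ / (d : ℝ)) ^ σ * lam 1 ^ (-(d : ℝ) / 2) *
          (z / (1 + 2 * σ / (d : ℝ))) ^ (σ + (d : ℝ) / 2) := by

  intro z hz
  have hd' : (0:ℝ) < d := by exact_mod_cast hd
  have hσ0 : (0:ℝ) < σ := by linarith
  have hc : (0:ℝ) < 2 * σ / d := by positivity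
  set c : ℝ := 2 * σ / d with hcdef
  set p : ℝ := σ + (d : ℝ) / 2 with hpdef
  have hp : 0 < p := by
    have h2 : (0:ℝ) < (d:ℝ)/2 := by positivity
    simp only [hpdef]; linarith
  set z₀ : ℝ := (1 + c) * lam 1 with hz₀def
  have hz₀pos : 0 < z₀ := by positivity
  have hz₀ge : lam 1 ≤ z₀ := by nlinarith
  have hzpos : 0 < z := lt_of_lt_of_le hz₀pos hz
  have hzge : lam 1 ≤ z := le_trans hz₀ge hz
  -- summability of Riesz mean at z₀
  obtain ⟨N, hN⟩ := (htend.eventually_ge_atTop z₀).exists_forall_of_atTop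
  have hsum : Summable (fun k : ℕ => (max (z₀ - lam (k + 1)) 0) ^ σ) := by
    apply summable_of_ne_finset_zero (s := Finset.range N)
    intro k hk
    have hk' : N ≤ k + 1 := by
      simp only [Finset.mem_range, not_lt] at hk; omega
    have : z₀ - lam (k+1) ≤ 0 := by have := hN (k+1) hk'; linarith
    rw [max_eq_right this, Real.zero_rpow hσ0.ne']
  -- single-term lower bound at z₀
  have hterm : (c * lam 1) ^ σ ≤ rieszMean lam σ z₀ := by
    have h0 : (max (z₀ - lam (0 + 1)) 0) ^ σ = (c * lam 1) ^ σ := by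
      have : z₀ - lam (0+1) = c * lam 1 := by simp [hz₀def]; ring
      rw [this, max_eq_left (by positivity)]
    calc (c * lam 1) ^ σ = (max (z₀ - lam (0 + 1)) 0) ^ σ := h0.symm
      _ ≤ rieszMean lam σ z₀ :=
        Summable.le_tsum hsum 0 (fun k _ => Real.rpow_nonneg (le_max_right _ _) σ)
  -- monotonicity step
  have hmon := hmonoR (Set.mem_Ici.mpr hz₀ge) (Set.mem_Ici.mpr hzge) hz
  simp only at hmon
  have hz₀p : (0:ℝ) < z₀ ^ p := Real.rpow_pos_of_pos hz₀pos p
  have hzp : (0:ℝ) < z ^ p := Real.rpow_pos_of_pos hzpos p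
  have hmon' : rieszMean lam σ z₀ * z ^ p ≤ rieszMean lam σ z * z₀ ^ p :=
    (div_le_div_iff₀ hz₀p hzp).mp hmon
  -- rewrite the target
  have h1c : (0:ℝ) < 1 + c := by linarith
  have key : c ^ σ * lam 1 ^ (-(d : ℝ) / 2) * (z / (1 + c)) ^ p
      = (c * lam 1) ^ σ * (z ^ p / z₀ ^ p) := by
    have e1 : (c * lam 1) ^ σ = c ^ σ * lam 1 ^ σ := Real.mul_rpow hc.le hpos.le
    have e2 : z₀ ^ p = (1 + c) ^ p * lam 1 ^ p := by
      rw [hz₀def]; exact Real.mul_rpow h1c.le hpos.le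
    have e3 : (z / (1 + c)) ^ p = z ^ p / (1 + c) ^ p := Real.div_rpow hzpos.le h1c.le p
    have e4 : lam 1 ^ (-(d : ℝ) / 2) = lam 1 ^ σ / lam 1 ^ p := by
      rw [← Real.rpow_sub hpos]
      congr 1
      simp only [hpdef]; ring
    rw [e1, e2, e3, e4]
    field_simp
    
  rw [key, ge_iff_le]
  calc (c * lam 1) ^ σ * (z ^ p / z₀ ^ p)
      ≤ rieszMean lam σ z₀ * (z ^ p / z₀ ^ p) := by
        apply mul_le_mul_of_nonneg_right hterm (by positivity)
    _ = rieszMean lam σ z₀ * z ^ p / z₀ ^ p := by ring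
    _ ≤ rieszMean lam σ z := by
        rw [div_le_iff₀ hz₀p]; linarith [hmon']
end

section
/- Let d be a positive integer, let σ be real with 1 ≤ σ < 2, and let λ : ℕ → ℝ (indexed from 1) be nondecreasing with λ_1 > 0 and λ_k → ∞. Suppose that (i) for all z ≥ λ_1, R_σ(z) ≥ (1 + d/(2(σ+1))) · R_{σ+1}(z)/z, and (ii) z ↦ R_{σ+1}(z)/z^{σ + 1 + d/2} is nondecreasing on [λ_1, ∞). Then for every z ≥ (1 + (2σ+2)/d)·λ_1, R_σ(z) ≥ (2σ+2)^σ · d^{d/2} · (d + 2σ + 2)^{−(σ + d/2)} · λ_1^{−d/2} · z^{σ + d/2}. -/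
open Real Filter

/-- Inequality (2.16) of Corollary 5: for `1 ≤ σ < 2`, given the difference inequality
relating `R_σ` to `R_{σ+1}` and monotonicity of `R_{σ+1}(z)/z^(σ+1+d/2)`, one has, for
`z ≥ (1 + (2σ+2)/d) λ_1`,
`R_σ(z) ≥ (2σ+2)^σ d^(d/2) (d+2σ+2)^(-(σ+d/2)) λ_1^(-d/2) z^(σ+d/2)`. -/
theorem rieszMean_lower_bound_sigma_lt_two (d : ℕ) (hd : 0 < d)
    (σ : ℝ) (hσ1 : 1 ≤ σ) (hσ2 : σ < 2) (lam : ℕ → ℝ)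
    (hmono : ∀ k : ℕ, 1 ≤ k → lam k ≤ lam (k + 1))
    (hpos : 0 < lam 1)
    (htend : Tendsto lam atTop atTop)
    (hdiff : ∀ z : ℝ, lam 1 ≤ z →
      rieszMean lam σ z ≥ (1 + (d : ℝ) / (2 * (σ + 1))) * rieszMean lam (σ + 1) z / z)
    (hmonoR : MonotoneOn (fun z => rieszMean lam (σ + 1) z / z ^ (σ + 1 + (d : ℝ) / 2))
      (Set.Ici (lam 1))) :
    ∀ z : ℝ, (1 + (2 * σ + 2) / (d : ℝ)) * lam 1 ≤ z →
      rieszMean lam σ z ≥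
        (2 * σ + 2) ^ σ * (d : ℝ) ^ ((d : ℝ) / 2) *
          ((d : ℝ) + 2 * σ + 2) ^ (-(σ + (d : ℝ) / 2)) *
          lam 1 ^ (-(d : ℝ) / 2) * z ^ (σ + (d : ℝ) / 2) := by
  intro z hz
  have hd' : (0 : ℝ) < d := by exact_mod_cast hd
  have ha : (0 : ℝ) < 2 * σ + 2 := by linarith
  set L := lam 1 with hLdef
  set z₀ : ℝ := (1 + (2 * σ + 2) / d) * L with hz₀def
  have hfac : (1 : ℝ) < 1 + (2 * σ + 2) / d := by
    have : 0 < (2 * σ + 2) / d := div_pos ha hd'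
    linarith
  have hLz₀ : L ≤ z₀ := by nlinarith
  have hz₀pos : 0 < z₀ := lt_of_lt_of_le hpos hLz₀
  have hzz₀ : z₀ ≤ z := hz
  have hzpos : 0 < z := lt_of_lt_of_le hz₀pos hzz₀
  have hLz : L ≤ z := hLz₀.trans hzz₀
  set p : ℝ := σ + 1 + (d : ℝ) / 2 with hp
  have hppos : 0 < p := by
    have : 0 < (d : ℝ) / 2 := by positivity
    simp only [hp]; linarith
  -- summability of the Riesz mean at z₀
  have hsum : Summable (fun k : ℕ => (max (z₀ - lam (k + 1)) 0) ^ (σ + 1)) := by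
    obtain ⟨N, hN⟩ := Filter.eventually_atTop.1 (htend.eventually_ge_atTop (z₀ + 1))
    apply summable_of_ne_finset_zero (s := Finset.range N)
    intro k hk
    have hkN : N ≤ k + 1 := by
      simp only [Finset.mem_range, not_lt] at hk; omega
    have h1 : z₀ + 1 ≤ lam (k + 1) := hN _ hkN
    have hm : max (z₀ - lam (k + 1)) 0 = 0 := max_eq_right (by linarith)
    rw [hm, Real.zero_rpow (by linarith : σ + 1 ≠ 0)]
  have step3 : (z₀ - L) ^ (σ + 1) ≤ rieszMean lam (σ + 1) z₀ := by
    have h0 : (max (z₀ - lam (0 + 1)) 0) ^ (σ + 1) ≤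
        ∑' k : ℕ, (max (z₀ - lam (k + 1)) 0) ^ (σ + 1) :=
      hsum.le_tsum 0 (fun j _ => Real.rpow_nonneg (le_max_right _ _) _)
    simp only [zero_add] at h0
    rwa [max_eq_left (by linarith : (0:ℝ) ≤ z₀ - L)] at h0
  have step2 := hmonoR (Set.mem_Ici.2 hLz₀) (Set.mem_Ici.2 hLz) hzz₀
  simp only [← hp] at step2
  have hzp : (0 : ℝ) < z ^ p := Real.rpow_pos_of_pos hzpos p
  have hz₀p : (0 : ℝ) < z₀ ^ p := Real.rpow_pos_of_pos hz₀pos p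
  have hRz : (z₀ - L) ^ (σ + 1) / z₀ ^ p * z ^ p ≤ rieszMean lam (σ + 1) z := by
    refine le_trans ?_ ((le_div_iff₀ hzp).1 step2)
    gcongr
  have hC : 0 < 1 + (d : ℝ) / (2 * (σ + 1)) := by
    have h1 : 0 < (d : ℝ) / (2 * (σ + 1)) := by positivity
    linarith
  have step1 := hdiff z hLz
  have chain : (1 + (d : ℝ) / (2 * (σ + 1))) * ((z₀ - L) ^ (σ + 1) / z₀ ^ p * z ^ p) / z ≤
      rieszMean lam σ z := by
    refine le_trans ?_ step1
    gcongr
  refine le_trans (le_of_eq ?_) chain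
  -- the algebraic identity for the constants
  have hZ0L : z₀ - L = (2 * σ + 2) / d * L := by
    rw [hz₀def]; field_simp; ring
  have hfac' : (1 : ℝ) + (2 * σ + 2) / d = ((d : ℝ) + 2 * σ + 2) / d := by
    field_simp; ring
  have hz₀' : z₀ = ((d : ℝ) + 2 * σ + 2) / d * L := by
    rw [hz₀def, hfac']
  have hCval : 1 + (d : ℝ) / (2 * (σ + 1)) = ((d : ℝ) + 2 * σ + 2) / (2 * σ + 2) := by
    field_simp; ring
  have hc : (0 : ℝ) < (d : ℝ) + 2 * σ + 2 := by linarith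
  have h1 : 0 < (2 * σ + 2) ^ σ * (d : ℝ) ^ ((d : ℝ) / 2) *
      ((d : ℝ) + 2 * σ + 2) ^ (-(σ + (d : ℝ) / 2)) * L ^ (-(d : ℝ) / 2) *
      z ^ (σ + (d : ℝ) / 2) := by positivity
  have h2 : 0 < (1 + (d : ℝ) / (2 * (σ + 1))) * ((z₀ - L) ^ (σ + 1) / z₀ ^ p * z ^ p) / z := by
    have : 0 < z₀ - L := by nlinarith
    positivity
  rw [← Real.exp_log h1, ← Real.exp_log h2]
  congr 1
  rw [hZ0L, hz₀', hCval]
  have hL0 : 0 < L := hpos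
  have haL : 0 < (2 * σ + 2) / (d : ℝ) * L := by positivity
  have hcL : 0 < ((d : ℝ) + 2 * σ + 2) / (d : ℝ) * L := by positivity
  have eA : Real.log ((2 * σ + 2) ^ σ * (d : ℝ) ^ ((d : ℝ) / 2) *
      ((d : ℝ) + 2 * σ + 2) ^ (-(σ + (d : ℝ) / 2)) * L ^ (-(d : ℝ) / 2) *
      z ^ (σ + (d : ℝ) / 2)) =
      σ * Real.log (2 * σ + 2) + (d : ℝ) / 2 * Real.log d +
        (-(σ + (d : ℝ) / 2)) * Real.log ((d : ℝ) + 2 * σ + 2) +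
        (-(d : ℝ) / 2) * Real.log L + (σ + (d : ℝ) / 2) * Real.log z := by
    rw [Real.log_mul (by positivity) (by positivity),
      Real.log_mul (by positivity) (by positivity),
      Real.log_mul (by positivity) (by positivity),
      Real.log_mul (by positivity) (by positivity),
      Real.log_rpow ha, Real.log_rpow hd', Real.log_rpow hc, Real.log_rpow hL0,
      Real.log_rpow hzpos]
  have eB : Real.log (((d : ℝ) + 2 * σ + 2) / (2 * σ + 2) *
      (((2 * σ + 2) / d * L) ^ (σ + 1) / (((d : ℝ) + 2 * σ + 2) / d * L) ^ p * z ^ p) / z) =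
      (Real.log ((d : ℝ) + 2 * σ + 2) - Real.log (2 * σ + 2)) +
        ((σ + 1) * (Real.log (2 * σ + 2) - Real.log d + Real.log L) -
          p * (Real.log ((d : ℝ) + 2 * σ + 2) - Real.log d + Real.log L) + p * Real.log z) -
        Real.log z := by
    rw [Real.log_div (by positivity) hzpos.ne',
      Real.log_mul (by positivity) (by positivity),
      Real.log_div (by positivity) (by positivity),
      Real.log_mul (by positivity) (by positivity),
      Real.log_div (by positivity) (by positivity),
      Real.log_rpow haL, Real.log_rpow hcL, Real.log_rpow hzpos,
      Real.log_mul (by positivity) hL0.ne', Real.log_mul (by positivity) hL0.ne',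
      Real.log_div (by positivity) hd'.ne', Real.log_div (by positivity) hd'.ne']
  rw [eA, eB, hp]
  ring
end

section
/- Let d be a positive integer, let σ be real with 0 < σ < 1, and let λ : ℕ → ℝ (indexed from 1) be nondecreasing with λ_1 > 0 and λ_k → ∞. Suppose that (i) for all z ≥ λ_1, R_σ(z) ≥ (1 + d/4) · R_{σ+1}(z)/z, (ii) for all z ≥ λ_1, R_{σ+1}(z) ≥ (1 + d/(2(σ+2))) · R_{σ+2}(z)/z, and (iii) z ↦ R_{σ+2}(z)/z^{σ + 2 + d/2} is nondecreasing on [λ_1, ∞). Then for every z ≥ (1 + (2σ+4)/d)·λ_1, R_σ(z) ≥ (1 + d/4) · (2σ+4)^{σ+1} · d^{d/2} · (d + 2σ + 4)^{−(σ + 1 + d/2)} · λ_1^{−d/2} · z^{σ + d/2}. -/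
open Real Filter

lemma constEq (σ D L z : ℝ) (hσ : 0 < σ) (hD : 0 < D) (hL : 0 < L) (hz : 0 < z) :
    (1 + D / 4) * ((1 + D / (2 * (σ + 2))) *
        (((1 + (2 * σ + 4) / D) * L - L) ^ (σ + 2) * z ^ (σ + 2 + D / 2)
          / ((1 + (2 * σ + 4) / D) * L) ^ (σ + 2 + D / 2)) / z) / z
      = (1 + D / 4) * (2 * σ + 4) ^ (σ + 1) * D ^ (D / 2) *
          (D + 2 * σ + 4) ^ (-(σ + 1 + D / 2)) * L ^ (-D / 2) * z ^ (σ + D / 2) := by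
  have hA : (0:ℝ) < 2 * σ + 4 := by linarith
  have hS : (0:ℝ) < D + 2 * σ + 4 := by linarith
  have h1 : (1 + (2 * σ + 4) / D) * L - L = (2 * σ + 4) / D * L := by
    field_simp; ring
  have h2 : (1 + (2 * σ + 4) / D) * L = (D + 2 * σ + 4) / D * L := by
    field_simp; ring
  have h3 : 1 + D / (2 * (σ + 2)) = (D + 2 * σ + 4) / (2 * σ + 4) := by
    field_simp; ring
  have h14 : (0:ℝ) < 1 + D / 4 := by positivity
  rw [h1, h2, h3]
  rw [Real.rpow_def_of_pos (by positivity : (0:ℝ) < (2*σ+4)/D*L),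
      Real.rpow_def_of_pos (by positivity : (0:ℝ) < (D+2*σ+4)/D*L),
      Real.rpow_def_of_pos hz, Real.rpow_def_of_pos hz,
      Real.rpow_def_of_pos hA, Real.rpow_def_of_pos hD,
      Real.rpow_def_of_pos hS, Real.rpow_def_of_pos hL,
      Real.log_mul (by positivity) (ne_of_gt hL),
      Real.log_mul (by positivity) (ne_of_gt hL),
      Real.log_div (ne_of_gt hA) (ne_of_gt hD),
      Real.log_div (ne_of_gt hS) (ne_of_gt hD)]
  rw [show (D + 2*σ+4)/(2*σ+4) = Real.exp (Real.log (D+2*σ+4) - Real.log (2*σ+4)) by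
        rw [Real.exp_sub, Real.exp_log hS, Real.exp_log hA],
      show (1 + D/4) = Real.exp (Real.log (1+D/4)) from (Real.exp_log h14).symm]
  simp only [← Real.exp_add, ← Real.exp_sub]
  rw [show ∀ P Q : ℝ, rexp P * (rexp Q / z) / z = rexp (P + Q) / (z * z) from
        fun P Q => by rw [Real.exp_add]; ring]
  rw [div_eq_iff (by positivity : z * z ≠ 0), ← Real.exp_log (by positivity : (0:ℝ) < z * z),
      Real.log_mul (ne_of_gt hz) (ne_of_gt hz), ← Real.exp_add, Real.exp_eq_exp]
  ring


/-- Inequality (2.17) of Corollary 5: for `0 < σ < 1`, given the difference inequalities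
(i), (ii) and monotonicity of `R_{σ+2}(z)/z^(σ+2+d/2)`, one has, for
`z ≥ (1 + (2σ+4)/d) λ_1`,
`R_σ(z) ≥ (1 + d/4) (2σ+4)^(σ+1) d^(d/2) (d+2σ+4)^(-(σ+1+d/2)) λ_1^(-d/2) z^(σ+d/2)`. -/
theorem rieszMean_lower_bound_sigma_lt_one (d : ℕ) (hd : 0 < d)
    (σ : ℝ) (hσ0 : 0 < σ) (hσ1 : σ < 1) (lam : ℕ → ℝ)
    (hmono : ∀ k : ℕ, 1 ≤ k → lam k ≤ lam (k + 1))
    (hpos : 0 < lam 1)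
    (htend : Tendsto lam atTop atTop)
    (hdiff1 : ∀ z : ℝ, lam 1 ≤ z →
      rieszMean lam σ z ≥ (1 + (d : ℝ) / 4) * rieszMean lam (σ + 1) z / z)
    (hdiff2 : ∀ z : ℝ, lam 1 ≤ z →
      rieszMean lam (σ + 1) z ≥
        (1 + (d : ℝ) / (2 * (σ + 2))) * rieszMean lam (σ + 2) z / z)
    (hmonoR : MonotoneOn (fun z => rieszMean lam (σ + 2) z / z ^ (σ + 2 + (d : ℝ) / 2))
      (Set.Ici (lam 1))) :
    ∀ z : ℝ, (1 + (2 * σ + 4) / (d : ℝ)) * lam 1 ≤ z →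
      rieszMean lam σ z ≥
        (1 + (d : ℝ) / 4) * (2 * σ + 4) ^ (σ + 1) * (d : ℝ) ^ ((d : ℝ) / 2) *
          ((d : ℝ) + 2 * σ + 4) ^ (-(σ + 1 + (d : ℝ) / 2)) *
          lam 1 ^ (-(d : ℝ) / 2) * z ^ (σ + (d : ℝ) / 2) := by
  intro z hz
  set D : ℝ := (d : ℝ) with hDdef
  have hD : (0:ℝ) < D := by rw [hDdef]; exact_mod_cast hd
  set L : ℝ := lam 1 with hLdef
  set z₀ : ℝ := (1 + (2 * σ + 4) / D) * L with hz₀def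
  have hLz₀ : L ≤ z₀ := by
    nlinarith [div_pos (by linarith : (0:ℝ) < 2*σ+4) hD]
  have hLz : L ≤ z := le_trans hLz₀ hz
  have hzpos : (0:ℝ) < z := lt_of_lt_of_le hpos hLz
  have hz₀pos : (0:ℝ) < z₀ := lt_of_lt_of_le hpos hLz₀
  set p : ℝ := σ + 2 + D / 2 with hpdef
  have hsum : Summable (fun k : ℕ => (max (z₀ - lam (k + 1)) 0) ^ (σ + 2)) := by
    obtain ⟨N, hN⟩ := (htend.eventually_ge_atTop z₀).exists_forall_of_atTop
    apply summable_of_ne_finset_zero (s := Finset.range N)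
    intro k hk
    have hkN : N ≤ k + 1 := by
      simp only [Finset.mem_range, not_lt] at hk; omega
    have : z₀ ≤ lam (k + 1) := hN _ hkN
    rw [max_eq_right (by linarith), Real.zero_rpow (by linarith)]
  have hfirst : (z₀ - L) ^ (σ + 2) ≤ rieszMean lam (σ + 2) z₀ := by
    have hl : lam (0 + 1) = L := rfl
    have h0 : max (z₀ - lam (0 + 1)) 0 = z₀ - L := by
      rw [hl, max_eq_left (by linarith)]
    have := hsum.le_tsum 0 (fun j _ => by positivity)
    rw [h0] at this
    exact this
  have hmm := hmonoR (Set.mem_Ici.mpr hLz₀) (Set.mem_Ici.mpr hLz) hz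
  simp only at hmm
  have hRz : rieszMean lam (σ + 2) z₀ * z ^ p / z₀ ^ p ≤ rieszMean lam (σ + 2) z := by
    rw [div_le_iff₀ (Real.rpow_pos_of_pos hz₀pos p)]
    rw [div_le_div_iff₀ (Real.rpow_pos_of_pos hz₀pos p) (Real.rpow_pos_of_pos hzpos p)] at hmm
    linarith
  have h14 : (0:ℝ) < 1 + D / 4 := by positivity
  have hc2 : (0:ℝ) < 1 + D / (2 * (σ + 2)) := by positivity
  have hd2 := hdiff2 z hLz
  calc (1 + D / 4) * (2 * σ + 4) ^ (σ + 1) * D ^ (D / 2) *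
          (D + 2 * σ + 4) ^ (-(σ + 1 + D / 2)) * L ^ (-D / 2) * z ^ (σ + D / 2)
      = (1 + D / 4) * ((1 + D / (2 * (σ + 2))) *
          ((z₀ - L) ^ (σ + 2) * z ^ p / z₀ ^ p) / z) / z :=
        (constEq σ D L z hσ0 hD hpos hzpos).symm
    _ ≤ (1 + D / 4) * ((1 + D / (2 * (σ + 2))) *
          (rieszMean lam (σ + 2) z₀ * z ^ p / z₀ ^ p) / z) / z := by
        gcongr
    _ ≤ (1 + D / 4) * ((1 + D / (2 * (σ + 2))) * rieszMean lam (σ + 2) z / z) / z := by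
        gcongr
    _ ≤ (1 + D / 4) * rieszMean lam (σ + 1) z / z := by
        gcongr
    _ ≤ rieszMean lam σ z := hdiff1 z hLz
end

section
/- Let d be a positive integer and let λ : ℕ → ℝ (indexed from 1) be nondecreasing with λ_1 > 0 and λ_k → ∞. Suppose that (i) for all z ≥ λ_1, N(z) ≥ (1 + d/4) · R_1(z)/z, (ii) for all z ≥ λ_1, R_1(z) ≥ (1 + d/4) · R_2(z)/z, and (iii) z ↦ R_2(z)/z^{2 + d/2} is nondecreasing on [λ_1, ∞). Then for every z ≥ (1 + 4/d)·λ_1, N(z) ≥ ( z / ((1 + 4/d)·λ_1) )^{d/2}. -/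
open Real Filter

/-- Inequality (2.19): given the difference inequalities (i), (ii) and monotonicity of
`R_2(z)/z^(2+d/2)`, one has `N(z) ≥ (z / ((1 + 4/d) λ_1))^(d/2)` for
`z ≥ (1 + 4/d) λ_1`. -/
theorem counting_lower_bound (d : ℕ) (hd : 0 < d) (lam : ℕ → ℝ)
    (hmono : ∀ k : ℕ, 1 ≤ k → lam k ≤ lam (k + 1))
    (hpos : 0 < lam 1)
    (htend : Tendsto lam atTop atTop)
    (hdiff0 : ∀ z : ℝ, lam 1 ≤ z →
      countingFn lam z ≥ (1 + (d : ℝ) / 4) * rieszMean lam 1 z / z)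
    (hdiff1 : ∀ z : ℝ, lam 1 ≤ z →
      rieszMean lam 1 z ≥ (1 + (d : ℝ) / 4) * rieszMean lam 2 z / z)
    (hmonoR : MonotoneOn (fun z => rieszMean lam 2 z / z ^ (2 + (d : ℝ) / 2))
      (Set.Ici (lam 1))) :
    ∀ z : ℝ, (1 + 4 / (d : ℝ)) * lam 1 ≤ z →
      countingFn lam z ≥ (z / ((1 + 4 / (d : ℝ)) * lam 1)) ^ ((d : ℝ) / 2) := by
  intro z hz
  have hd' : (0:ℝ) < d := by exact_mod_cast hd
  set c : ℝ := 1 + (d:ℝ)/4 with hc_def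
  set μ : ℝ := (1 + 4/(d:ℝ)) * lam 1 with hμ_def
  have hc0 : (0:ℝ) < c := by positivity
  have hμpos : (0:ℝ) < μ := by positivity
  have hlm : lam 1 ≤ μ := by
    rw [hμ_def]
    nlinarith [div_pos (by norm_num : (0:ℝ) < 4) hd']
  have hz0 : (0:ℝ) < z := lt_of_lt_of_le hμpos hz
  have hlz : lam 1 ≤ z := hlm.trans hz
  set e : ℝ := 2 + (d:ℝ)/2 with he_def
  set p : ℝ := (d:ℝ)/2 with hp_def
  have hp0 : (0:ℝ) < p := by positivity
  -- Summability of the order-2 Riesz mean at μ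
  obtain ⟨N, hN⟩ := Filter.eventually_atTop.mp (Filter.tendsto_atTop.mp htend μ)
  have hsum : Summable (fun k : ℕ => (max (μ - lam (k+1)) 0) ^ (2:ℝ)) := by
    apply summable_of_ne_finset_zero (s := Finset.range N)
    intro k hk
    have hk' : N ≤ k + 1 := by
      simp only [Finset.mem_range, not_lt] at hk; omega
    have : μ - lam (k+1) ≤ 0 := by linarith [hN (k+1) hk']
    rw [max_eq_right this, Real.zero_rpow (by norm_num)]
  -- R₂(μ) ≥ (μ - λ₁)²
  have hR2μ : (μ - lam 1) ^ (2:ℝ) ≤ rieszMean lam 2 μ := by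
    have h0 : (max (μ - lam (0+1)) 0) ^ (2:ℝ) ≤ rieszMean lam 2 μ :=
      hsum.le_tsum 0 (fun i _ => Real.rpow_nonneg (le_max_right _ _) 2)
    simpa [max_eq_left (by linarith : (0:ℝ) ≤ μ - lam 1)] using h0
  -- μ - λ₁ = μ / c
  have hμc : μ - lam 1 = μ / c := by
    rw [hμ_def, hc_def]
    field_simp
    ring
  -- Step 1: N(z) ≥ c² R₂(z)/z²
  have h1 : c^2 * rieszMean lam 2 z / z^2 ≤ countingFn lam z := by
    have ha := hdiff0 z hlz
    have hb := hdiff1 z hlz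
    calc c^2 * rieszMean lam 2 z / z^2 = c * (c * rieszMean lam 2 z / z) / z := by
          ring
      _ ≤ c * rieszMean lam 1 z / z := by gcongr
      _ ≤ countingFn lam z := ha
  -- Step 2: R₂(z) ≥ (R₂(μ)/μ^e) · z^e
  have h2 : rieszMean lam 2 μ / μ ^ e * z ^ e ≤ rieszMean lam 2 z := by
    have hm := hmonoR (Set.mem_Ici.mpr hlm) (Set.mem_Ici.mpr hlz) hz
    simp only at hm
    have hze : (0:ℝ) < z ^ e := Real.rpow_pos_of_pos hz0 e
    calc rieszMean lam 2 μ / μ ^ e * z ^ e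
        ≤ rieszMean lam 2 z / z ^ e * z ^ e := by gcongr
      _ = rieszMean lam 2 z := div_mul_cancel₀ _ (ne_of_gt hze)
  -- z^e = z² · z^p
  have hzsplit : z ^ e = z ^ 2 * z ^ p := by
    rw [he_def, Real.rpow_add hz0]
    congr 1
    rw [show ((2:ℝ)) = ((2:ℕ):ℝ) by norm_num, Real.rpow_natCast]
  -- R₂(μ) ≥ μ²/c²
  have hR2μ' : μ ^ 2 / c ^ 2 ≤ rieszMean lam 2 μ := by
    have : (μ - lam 1) ^ (2:ℝ) = μ ^ 2 / c ^ 2 := by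
      rw [hμc, show ((2:ℝ)) = ((2:ℕ):ℝ) by norm_num, Real.rpow_natCast, div_pow]
    linarith [hR2μ]
  -- μ^e = μ² · μ^p
  have hμsplit : μ ^ e = μ ^ 2 * μ ^ p := by
    rw [he_def, Real.rpow_add hμpos]
    congr 1
    rw [show ((2:ℝ)) = ((2:ℕ):ℝ) by norm_num, Real.rpow_natCast]
  have hμe : (0:ℝ) < μ ^ e := Real.rpow_pos_of_pos hμpos e
  have hμp : (0:ℝ) < μ ^ p := Real.rpow_pos_of_pos hμpos p
  have hzp : (0:ℝ) < z ^ p := Real.rpow_pos_of_pos hz0 p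
  -- c² R₂(μ)/μ^e ≥ μ^{-p}
  have h3 : (μ ^ p)⁻¹ ≤ c^2 * (rieszMean lam 2 μ / μ ^ e) := by
    have key : c^2 * ((μ ^ 2 / c ^ 2) / μ ^ e) = (μ ^ p)⁻¹ := by
      rw [hμsplit]
      field_simp
    rw [← key]
    gcongr
  -- final assembly
  rw [ge_iff_le, Real.div_rpow hz0.le hμpos.le]
  have hmain : z ^ p / μ ^ p ≤ c^2 * rieszMean lam 2 z / z^2 := by
    calc z ^ p / μ ^ p = (μ ^ p)⁻¹ * z ^ p := by ring
      _ ≤ (c^2 * (rieszMean lam 2 μ / μ ^ e)) * z ^ p := by gcongr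
      _ = c^2 * (rieszMean lam 2 μ / μ ^ e * (z ^ 2 * z ^ p)) / z ^ 2 := by
          field_simp
      _ = c^2 * (rieszMean lam 2 μ / μ ^ e * z ^ e) / z ^ 2 := by rw [hzsplit]
      _ ≤ c^2 * rieszMean lam 2 z / z ^ 2 := by gcongr
  linarith [h1, hmain]
end

section
/- Let d be a positive integer, let j ≥ 1 be an integer, and let λ : ℕ → ℝ (indexed from 1) be nondecreasing with λ_1 > 0 and λ_k → ∞. Suppose that (i) z ↦ R_2(z)/z^{2 + d/2} is nondecreasing on [λ_1, ∞), and (ii) λ_j ≤ (1 + 4/d)·λ̄_j. Then for every z ≥ (1 + 4/d)·λ̄_j, R_2(z) ≥ j · z^{2 + d/2} / ( (1 + d/4)^2 · ((1 + 4/d)·λ̄_j)^{d/2} ). -/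
open Real Filter

lemma rieszMean_summable (lam : ℕ → ℝ) (htend : Tendsto lam atTop atTop) (z : ℝ) :
    Summable (fun k : ℕ => (max (z - lam (k + 1)) 0) ^ (2:ℝ)) := by
  obtain ⟨N, hN⟩ := (tendsto_atTop.mp htend z).exists_forall_of_atTop
  apply summable_of_ne_finset_zero (s := Finset.range N)
  intro k hk
  simp only [Finset.mem_range, not_lt] at hk
  have : z - lam (k + 1) ≤ 0 := by
    have := hN (k + 1) (by omega)
    linarith
  rw [max_eq_right this]
  simp [Real.zero_rpow]

/-- Inequality (2.26) of Corollary 7: under monotonicity of `R_2(z)/z^(2+d/2)` and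
Yang's inequality `λ_j ≤ (1 + 4/d) λ̄_j`, for `z ≥ (1 + 4/d) λ̄_j`,
`R_2(z) ≥ j z^(2+d/2) / ((1 + d/4)^2 ((1 + 4/d) λ̄_j)^(d/2))`. -/
theorem rieszMean_two_lower_bound_avg (d : ℕ) (hd : 0 < d) (j : ℕ) (hj : 1 ≤ j)
    (lam : ℕ → ℝ)
    (hmono : ∀ k : ℕ, 1 ≤ k → lam k ≤ lam (k + 1))
    (hpos : 0 < lam 1)
    (htend : Tendsto lam atTop atTop)
    (hmonoR : MonotoneOn (fun z => rieszMean lam 2 z / z ^ (2 + (d : ℝ) / 2))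
      (Set.Ici (lam 1)))
    (hyang : lam j ≤ (1 + 4 / (d : ℝ)) * eigAvg lam j) :
    ∀ z : ℝ, (1 + 4 / (d : ℝ)) * eigAvg lam j ≤ z →
      rieszMean lam 2 z ≥
        (j : ℝ) * z ^ (2 + (d : ℝ) / 2) /
          ((1 + (d : ℝ) / 4) ^ 2 *
            ((1 + 4 / (d : ℝ)) * eigAvg lam j) ^ ((d : ℝ) / 2)) := by
  intro z hz
  have hdpos : (0:ℝ) < d := by exact_mod_cast hd
  have hjpos : (0:ℝ) < j := by exact_mod_cast hj
  -- monotonicity of lam on [1, ∞)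
  have lamMono : ∀ m n : ℕ, 1 ≤ m → m ≤ n → lam m ≤ lam n := by
    intro m n hm hmn
    induction n with
    | zero => omega
    | succ n ih =>
      rcases Nat.lt_or_ge m (n + 1) with h | h
      · exact le_trans (ih (by omega)) (hmono n (by omega))
      · have : m = n + 1 := by omega
        simp [this]
  set A := eigAvg lam j with hA
  set z0 := (1 + 4 / (d : ℝ)) * A with hz0
  have hlam1A : lam 1 ≤ A := by
    rw [hA, eigAvg, le_div_iff₀ hjpos]
    have : ∀ ℓ ∈ Finset.Icc 1 j, lam 1 ≤ lam ℓ := by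
      intro ℓ hℓ
      exact lamMono 1 ℓ le_rfl (Finset.mem_Icc.mp hℓ).1
    calc lam 1 * j = ∑ ℓ ∈ Finset.Icc 1 j, lam 1 := by
          simp [Nat.card_Icc, mul_comm]
      _ ≤ ∑ ℓ ∈ Finset.Icc 1 j, lam ℓ := Finset.sum_le_sum this
  have hApos : 0 < A := lt_of_lt_of_le hpos hlam1A
  have hcoef : (1:ℝ) < 1 + 4 / d := by
    have : (0:ℝ) < 4 / d := by positivity
    linarith
  have hAz0 : A ≤ z0 := by
    rw [hz0]; nlinarith
  have hz0pos : 0 < z0 := lt_of_lt_of_le hApos hAz0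
  have hlam1z0 : lam 1 ≤ z0 := le_trans hlam1A hAz0
  -- key lower bound at z0
  have hsumA : ∑ ℓ ∈ Finset.Icc 1 j, lam ℓ = j * A := by
    rw [hA, eigAvg]; field_simp
  have hkey : (j : ℝ) * (z0 - A) ^ 2 ≤ rieszMean lam 2 z0 := by
    have hle : ∀ k ∈ Finset.range j, lam (k + 1) ≤ z0 := by
      intro k hk
      exact le_trans (lamMono (k + 1) j (by omega) (Finset.mem_range.mp hk)) hyang
    have hsum : ∑ k ∈ Finset.range j, (z0 - lam (k + 1)) = j * (z0 - A) := by
      have : ∑ k ∈ Finset.range j, lam (k + 1) = ∑ ℓ ∈ Finset.Icc 1 j, lam ℓ := by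
        rw [show Finset.Icc 1 j = Finset.Ico 1 (j + 1) by rw [Finset.Ico_add_one_right_eq_Icc],
          Finset.sum_Ico_eq_sum_range]
        simp [add_comm]
      rw [Finset.sum_sub_distrib, this, hsumA]
      simp [mul_sub]
    have hcs : ((j : ℝ) * (z0 - A)) ^ 2 ≤
        (j : ℝ) * ∑ k ∈ Finset.range j, (z0 - lam (k + 1)) ^ 2 := by
      rw [← hsum]
      have := sq_sum_le_card_mul_sum_sq (s := Finset.range j)
        (f := fun k => z0 - lam (k + 1))
      simpa using this
    have h1 : (j : ℝ) * (z0 - A) ^ 2 ≤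
        ∑ k ∈ Finset.range j, (z0 - lam (k + 1)) ^ 2 := by
      have hj2 : ((j : ℝ) * (z0 - A)) ^ 2 = (j : ℝ) * ((j : ℝ) * (z0 - A) ^ 2) := by ring
      rw [hj2] at hcs
      exact le_of_mul_le_mul_left hcs hjpos
    have h2 : ∑ k ∈ Finset.range j, (z0 - lam (k + 1)) ^ 2 ≤ rieszMean lam 2 z0 := by
      rw [rieszMean]
      have heq : ∀ k ∈ Finset.range j,
          (z0 - lam (k + 1)) ^ 2 = (max (z0 - lam (k + 1)) 0) ^ (2:ℝ) := by
        intro k hk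
        rw [max_eq_left (by linarith [hle k hk]), ← Real.rpow_natCast]
        norm_num
      rw [Finset.sum_congr rfl heq]
      exact Summable.sum_le_tsum _ (fun k _ => Real.rpow_nonneg (le_max_right _ _) _)
        (rieszMean_summable lam htend z0)
    linarith
  -- z0 - A = z0 / (1 + d/4)
  have hident : z0 - A = z0 / (1 + (d:ℝ)/4) := by
    rw [hz0]; field_simp; ring
  have hden : (0:ℝ) < 1 + (d:ℝ)/4 := by positivity
  have hkey2 : (j : ℝ) * z0 ^ (2:ℕ) / (1 + (d:ℝ)/4) ^ 2 ≤ rieszMean lam 2 z0 := by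
    calc (j : ℝ) * z0 ^ (2:ℕ) / (1 + (d:ℝ)/4) ^ 2
        = (j : ℝ) * (z0 / (1 + (d:ℝ)/4)) ^ 2 := by field_simp
      _ = (j : ℝ) * (z0 - A) ^ 2 := by rw [hident]
      _ ≤ _ := hkey
  -- monotonicity step
  have hzpos : 0 < z := lt_of_lt_of_le hz0pos hz
  have hmonoStep : rieszMean lam 2 z0 / z0 ^ (2 + (d:ℝ)/2) ≤
      rieszMean lam 2 z / z ^ (2 + (d:ℝ)/2) :=
    hmonoR (Set.mem_Ici.mpr hlam1z0) (Set.mem_Ici.mpr (le_trans hlam1z0 hz)) hz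
  have hz0rpow : z0 ^ (2 + (d:ℝ)/2) = z0 ^ (2:ℕ) * z0 ^ ((d:ℝ)/2) := by
    rw [Real.rpow_add hz0pos]
    norm_num [Real.rpow_natCast]
  have hzrpos : 0 < z ^ (2 + (d:ℝ)/2) := Real.rpow_pos_of_pos hzpos _
  have hz0rpos : 0 < z0 ^ (2 + (d:ℝ)/2) := Real.rpow_pos_of_pos hz0pos _
  have hz0d2 : 0 < z0 ^ ((d:ℝ)/2) := Real.rpow_pos_of_pos hz0pos _
  have hlower : (j : ℝ) / ((1 + (d:ℝ)/4) ^ 2 * z0 ^ ((d:ℝ)/2)) ≤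
      rieszMean lam 2 z0 / z0 ^ (2 + (d:ℝ)/2) := by
    rw [div_le_div_iff₀ (by positivity) hz0rpos, hz0rpow]
    calc (j:ℝ) * (z0 ^ (2:ℕ) * z0 ^ ((d:ℝ)/2))
        = ((j:ℝ) * z0 ^ (2:ℕ) / (1 + (d:ℝ)/4) ^ 2) * ((1 + (d:ℝ)/4) ^ 2 * z0 ^ ((d:ℝ)/2)) := by
          field_simp
      _ ≤ _ := by
          apply mul_le_mul_of_nonneg_right hkey2 (by positivity)
  have hfinal : (j : ℝ) / ((1 + (d:ℝ)/4) ^ 2 * z0 ^ ((d:ℝ)/2)) ≤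
      rieszMean lam 2 z / z ^ (2 + (d:ℝ)/2) := le_trans hlower hmonoStep
  rw [ge_iff_le]
  calc (j:ℝ) * z ^ (2 + (d:ℝ)/2) / ((1 + (d:ℝ)/4) ^ 2 * z0 ^ ((d:ℝ)/2))
      = ((j:ℝ) / ((1 + (d:ℝ)/4) ^ 2 * z0 ^ ((d:ℝ)/2))) * z ^ (2 + (d:ℝ)/2) := by ring
    _ ≤ (rieszMean lam 2 z / z ^ (2 + (d:ℝ)/2)) * z ^ (2 + (d:ℝ)/2) :=
        mul_le_mul_of_nonneg_right hfinal hzrpos.le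
    _ = rieszMean lam 2 z := div_mul_cancel₀ _ (ne_of_gt hzrpos)
end

section
/- Let d be a positive integer, let j ≥ 1 be an integer, and let λ : ℕ → ℝ (indexed from 1) be nondecreasing with λ_1 > 0 and λ_k → ∞. Suppose that (i) z ↦ R_2(z)/z^{2 + d/2} is nondecreasing on [λ_1, ∞), (ii) λ_j ≤ (1 + 4/d)·λ̄_j, and (iii) for all z ≥ λ_1, R_1(z) ≥ (1 + d/4) · R_2(z)/z. Then for every z ≥ (1 + 4/d)·λ̄_j, R_1(z) ≥ j · z^{1 + d/2} / ( (1 + d/4) · ((1 + 4/d)·λ̄_j)^{d/2} ). -/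
open Real Filter

/-- Inequality (2.27) of Corollary 7: for `z ≥ (1 + 4/d) λ̄_j`,
`R_1(z) ≥ j z^(1+d/2) / ((1 + d/4) ((1 + 4/d) λ̄_j)^(d/2))`. -/
theorem rieszMean_one_lower_bound_avg (d : ℕ) (hd : 0 < d) (j : ℕ) (hj : 1 ≤ j)
    (lam : ℕ → ℝ)
    (hmono : ∀ k : ℕ, 1 ≤ k → lam k ≤ lam (k + 1))
    (hpos : 0 < lam 1)
    (htend : Tendsto lam atTop atTop)
    (hmonoR : MonotoneOn (fun z => rieszMean lam 2 z / z ^ (2 + (d : ℝ) / 2))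
      (Set.Ici (lam 1)))
    (hyang : lam j ≤ (1 + 4 / (d : ℝ)) * eigAvg lam j)
    (hdiff1 : ∀ z : ℝ, lam 1 ≤ z →
      rieszMean lam 1 z ≥ (1 + (d : ℝ) / 4) * rieszMean lam 2 z / z) :
    ∀ z : ℝ, (1 + 4 / (d : ℝ)) * eigAvg lam j ≤ z →
      rieszMean lam 1 z ≥
        (j : ℝ) * z ^ (1 + (d : ℝ) / 2) /
          ((1 + (d : ℝ) / 4) *
            ((1 + 4 / (d : ℝ)) * eigAvg lam j) ^ ((d : ℝ) / 2)) := by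
  intro z hz
  have hDpos : (0:ℝ) < d := Nat.cast_pos.mpr hd
  have hjpos : (0:ℝ) < j := Nat.cast_pos.mpr hj
  -- monotonicity of lam
  have hmono' : ∀ k l : ℕ, 1 ≤ k → k ≤ l → lam k ≤ lam l := by
    intro k l hk hkl
    induction l, hkl using Nat.le_induction with
    | base => exact le_refl _
    | succ n hn ih => exact ih.trans (hmono n (hk.trans hn))
  set A := eigAvg lam j with hA
  have hA1 : lam 1 ≤ A := by
    have hsum : (j : ℝ) * lam 1 ≤ ∑ ℓ ∈ Finset.Icc 1 j, lam ℓ := by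
      have := Finset.sum_le_sum (s := Finset.Icc 1 j)
        (f := fun _ => lam 1) (g := lam)
        (fun i hi => hmono' 1 i le_rfl (Finset.mem_Icc.mp hi).1)
      simpa [Finset.sum_const, Nat.card_Icc, mul_comm] using this
    rw [hA, eigAvg, le_div_iff₀ hjpos]
    linarith [hsum]
  have hApos : 0 < A := lt_of_lt_of_le hpos hA1
  set w : ℝ := (1 + 4 / (d : ℝ)) * A with hw
  have hone : (1:ℝ) < 1 + 4 / d := by
    have : (0:ℝ) < 4 / d := by positivity
    linarith
  have hAw : A ≤ w := by
    rw [hw]; nlinarith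
  have hwpos : 0 < w := lt_of_lt_of_le hApos hAw
  have hw1 : lam 1 ≤ w := hA1.trans hAw
  have hzpos : 0 < z := lt_of_lt_of_le hwpos hz
  have hz1 : lam 1 ≤ z := hw1.trans hz
  -- summability
  have hsummable : ∀ σ : ℝ, σ ≠ 0 → ∀ y : ℝ,
      Summable (fun k : ℕ => (max (y - lam (k+1)) 0) ^ σ) := by
    intro σ hσ y
    obtain ⟨N, hN⟩ := (tendsto_atTop.mp htend y).exists_forall_of_atTop
    apply summable_of_ne_finset_zero (s := Finset.range N)
    intro k hk
    have hk' : N ≤ k + 1 := by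
      simp only [Finset.mem_range, not_lt] at hk; omega
    have : y - lam (k+1) ≤ 0 := by linarith [hN (k+1) hk']
    rw [max_eq_right this, Real.zero_rpow hσ]
  -- lower bound for R_2 at w
  have hkey : (j : ℝ) * (4 / d * A) ^ 2 ≤ rieszMean lam 2 w := by
    have hterm : ∀ k ∈ Finset.range j,
        (max (w - lam (k+1)) 0) ^ (2:ℝ) = (w - lam (k+1)) ^ 2 := by
      intro k hk
      have hk' : k + 1 ≤ j := Finset.mem_range.mp hk
      have h1 : lam (k+1) ≤ lam j := hmono' (k+1) j (Nat.le_add_left 1 k) hk'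
      have h2 : 0 ≤ w - lam (k+1) := by linarith [hyang]
      rw [max_eq_left h2, show (2:ℝ) = ((2:ℕ):ℝ) by norm_num, Real.rpow_natCast]
    have hle : ∑ k ∈ Finset.range j, (max (w - lam (k+1)) 0) ^ (2:ℝ)
        ≤ rieszMean lam 2 w := by
      apply Summable.sum_le_tsum
      · intro b _
        exact Real.rpow_nonneg (le_max_right _ _) _
      · exact hsummable 2 two_ne_zero w
    rw [Finset.sum_congr rfl hterm] at hle
    -- Cauchy–Schwarz
    have hcs := sq_sum_le_card_mul_sum_sq
      (s := Finset.range j) (f := fun k => w - lam (k+1))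
    have hsum : ∑ k ∈ Finset.range j, (w - lam (k+1)) = (j:ℝ) * (4 / d * A) := by
      have h1 : ∑ k ∈ Finset.range j, lam (k+1) = ∑ ℓ ∈ Finset.Icc 1 j, lam ℓ := by
        rw [← Finset.Ico_add_one_right_eq_Icc, Finset.sum_Ico_eq_sum_range]
        simp [add_comm]
      have h2 : ∑ ℓ ∈ Finset.Icc 1 j, lam ℓ = (j:ℝ) * A := by
        rw [hA, eigAvg]; field_simp
      rw [Finset.sum_sub_distrib, Finset.sum_const, Finset.card_range, h1, h2]
      rw [hw]; ring
    rw [hsum, Finset.card_range] at hcs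
    have hj2 : ((j:ℝ) * (4 / d * A)) ^ 2 = (j:ℝ) * ((j:ℝ) * (4 / d * A)^2) := by ring
    rw [hj2] at hcs
    have := le_of_mul_le_mul_left (by simpa using hcs) hjpos
    linarith [this, hle]
  -- monotonicity step
  have hmR := hmonoR (Set.mem_Ici.mpr hw1) (Set.mem_Ici.mpr hz1) (hz.trans_eq rfl)
  simp only at hmR
  have hwp : (0:ℝ) < w ^ (2 + (d:ℝ)/2) := Real.rpow_pos_of_pos hwpos _
  have hzp : (0:ℝ) < z ^ (2 + (d:ℝ)/2) := Real.rpow_pos_of_pos hzpos _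
  have hR2z : rieszMean lam 2 w * z ^ (2 + (d:ℝ)/2) / w ^ (2 + (d:ℝ)/2)
      ≤ rieszMean lam 2 z := by
    rw [div_le_iff₀ hwp]
    have := (div_le_div_iff₀ hwp hzp).mp hmR
    linarith
  have hd1 := hdiff1 z hz1
  -- exponent rewrites
  have hwsplit : w ^ (2 + (d:ℝ)/2) = w^2 * w ^ ((d:ℝ)/2) := by
    rw [Real.rpow_add hwpos, show ((2:ℝ)) = ((2:ℕ):ℝ) by norm_num, Real.rpow_natCast]
  have hzsplit : z ^ (2 + (d:ℝ)/2) = z ^ (1 + (d:ℝ)/2) * z := by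
    rw [show (2 + (d:ℝ)/2) = (1 + (d:ℝ)/2) + 1 by ring, Real.rpow_add hzpos,
      Real.rpow_one]
  have hwr : (0:ℝ) < w ^ ((d:ℝ)/2) := Real.rpow_pos_of_pos hwpos _
  have hzq : (0:ℝ) < z ^ (1 + (d:ℝ)/2) := Real.rpow_pos_of_pos hzpos _
  have hd4 : (0:ℝ) < 1 + (d:ℝ)/4 := by positivity
  -- final assembly
  have hne1 : (4 / (d:ℝ) * A) ≠ 0 := by positivity
  have hwA : w^2 = (1 + (d:ℝ)/4)^2 * (4/(d:ℝ) * A)^2 := by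
    rw [hw]; field_simp; ring
  have hLHS : (1 + (d:ℝ)/4) * (rieszMean lam 2 w * z ^ (2 + (d:ℝ)/2)
        / w ^ (2 + (d:ℝ)/2)) / z
      = (1 + (d:ℝ)/4) * rieszMean lam 2 w * z ^ (1 + (d:ℝ)/2)
        / (w^2 * w ^ ((d:ℝ)/2)) := by
    rw [hwsplit, hzsplit]
    field_simp
  have heq : (1 + (d:ℝ)/4) * ((j:ℝ) * (4/(d:ℝ)*A)^2) * z ^ (1 + (d:ℝ)/2)
        / (w^2 * w ^ ((d:ℝ)/2))
      = (j : ℝ) * z ^ (1 + (d:ℝ)/2) / ((1 + (d:ℝ)/4) * w ^ ((d:ℝ)/2)) := by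
    rw [hwA]
    field_simp
  have hfinal : (1 + (d:ℝ)/4) * (rieszMean lam 2 w * z ^ (2 + (d:ℝ)/2)
        / w ^ (2 + (d:ℝ)/2)) / z
      ≥ (j : ℝ) * z ^ (1 + (d:ℝ)/2) / ((1 + (d:ℝ)/4) * w ^ ((d:ℝ)/2)) := by
    rw [hLHS, ← heq]
    gcongr
  have hmid : (1 + (d:ℝ)/4) * (rieszMean lam 2 w * z ^ (2 + (d:ℝ)/2)
        / w ^ (2 + (d:ℝ)/2)) / z ≤ (1 + (d:ℝ)/4) * rieszMean lam 2 z / z := by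
    gcongr
  calc rieszMean lam 1 z ≥ (1 + (d:ℝ)/4) * rieszMean lam 2 z / z := hd1
    _ ≥ _ := hmid
    _ ≥ (j : ℝ) * z ^ (1 + (d:ℝ)/2) / ((1 + (d:ℝ)/4) * w ^ ((d:ℝ)/2)) := hfinal
end

section
/- Let d be a positive integer, let j ≥ 1 be an integer, and let λ : ℕ → ℝ (indexed from 1) be nondecreasing with λ_1 > 0 and λ_k → ∞. Suppose that (i) z ↦ R_2(z)/z^{2 + d/2} is nondecreasing on [λ_1, ∞), (ii) λ_j ≤ (1 + 4/d)·λ̄_j, (iii) for all z ≥ λ_1, R_1(z) ≥ (1 + d/4) · R_2(z)/z, and (iv) for all z ≥ λ_1, N(z) ≥ (1 + d/4) · R_1(z)/z. Then for every z ≥ (1 + 4/d)·λ̄_j, N(z) ≥ j · ( z / ((1 + 4/d)·λ̄_j) )^{d/2}. -/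
open Real Filter

section Aux

variable (lam : ℕ → ℝ)

lemma lam_mono (hmono : ∀ k : ℕ, 1 ≤ k → lam k ≤ lam (k + 1)) :
    ∀ k m : ℕ, 1 ≤ k → k ≤ m → lam k ≤ lam m := by
  intro k m hk hkm
  induction m, hkm using Nat.le_induction with
  | base => exact le_rfl
  | succ n hn ih => exact ih.trans (hmono n (hk.trans hn))

lemma riesz_summable (htend : Tendsto lam atTop atTop) (σ z : ℝ) (hσ : σ ≠ 0) :
    Summable (fun k : ℕ => (max (z - lam (k + 1)) 0) ^ σ) := by
  obtain ⟨N, hN⟩ := (htend.eventually_ge_atTop z).exists_forall_of_atTop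
  apply summable_of_ne_finset_zero (s := Finset.range N)
  intro k hk
  simp only [Finset.mem_range, not_lt] at hk
  have : z - lam (k + 1) ≤ 0 := sub_nonpos.2 (hN (k + 1) (hk.trans (Nat.le_succ k)))
  rw [max_eq_right this, Real.zero_rpow hσ]

end Aux

/-- Inequality (2.28) of Corollary 7: for `z ≥ (1 + 4/d) λ̄_j`,
`N(z) ≥ j (z / ((1 + 4/d) λ̄_j))^(d/2)`. -/
theorem counting_lower_bound_avg (d : ℕ) (hd : 0 < d) (j : ℕ) (hj : 1 ≤ j)
    (lam : ℕ → ℝ)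
    (hmono : ∀ k : ℕ, 1 ≤ k → lam k ≤ lam (k + 1))
    (hpos : 0 < lam 1)
    (htend : Tendsto lam atTop atTop)
    (hmonoR : MonotoneOn (fun z => rieszMean lam 2 z / z ^ (2 + (d : ℝ) / 2))
      (Set.Ici (lam 1)))
    (hyang : lam j ≤ (1 + 4 / (d : ℝ)) * eigAvg lam j)
    (hdiff1 : ∀ z : ℝ, lam 1 ≤ z →
      rieszMean lam 1 z ≥ (1 + (d : ℝ) / 4) * rieszMean lam 2 z / z)
    (hdiff0 : ∀ z : ℝ, lam 1 ≤ z →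
      countingFn lam z ≥ (1 + (d : ℝ) / 4) * rieszMean lam 1 z / z) :
    ∀ z : ℝ, (1 + 4 / (d : ℝ)) * eigAvg lam j ≤ z →
      countingFn lam z ≥
        (j : ℝ) * (z / ((1 + 4 / (d : ℝ)) * eigAvg lam j)) ^ ((d : ℝ) / 2) := by
  intro z hz
  have hd' : (0:ℝ) < d := by exact_mod_cast hd
  have hj' : (0:ℝ) < j := by exact_mod_cast hj
  set lb := eigAvg lam j with hlb
  set M := (1 + 4 / (d : ℝ)) * lb with hM
  -- positivity of the average
  have hlam_mono := lam_mono lam hmono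
  have hlbpos : 0 < lb := by
    rw [hlb, eigAvg]
    apply div_pos _ hj'
    have : ∀ ℓ ∈ Finset.Icc 1 j, 0 < lam ℓ := fun ℓ hℓ => by
      have := hlam_mono 1 ℓ le_rfl (Finset.mem_Icc.1 hℓ).1
      linarith
    exact Finset.sum_pos this ⟨1, Finset.mem_Icc.2 ⟨le_rfl, hj⟩⟩
  have hc : (0:ℝ) < 1 + 4 / (d:ℝ) := by positivity
  have hMpos : 0 < M := mul_pos hc hlbpos
  have hl1j : lam 1 ≤ lam j := hlam_mono 1 j le_rfl hj
  have hl1M : lam 1 ≤ M := hl1j.trans hyang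
  have hl1z : lam 1 ≤ z := hl1M.trans hz
  have hzpos : 0 < z := hMpos.trans_le hz
  -- R2(M) ≥ j (M - lb)^2
  have hsum : Summable (fun k : ℕ => (max (M - lam (k + 1)) 0) ^ (2:ℝ)) :=
    riesz_summable lam htend 2 M two_ne_zero
  have hterm : ∀ k ∈ Finset.range j, (M - lam (k+1))^2 ≤ (max (M - lam (k+1)) 0) ^ (2:ℝ) := by
    intro k hk
    have hk' : k + 1 ≤ j := Finset.mem_range.1 hk
    have : lam (k+1) ≤ M := (hlam_mono (k+1) j (Nat.le_add_left 1 k) hk').trans hyang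
    have h0 : 0 ≤ M - lam (k+1) := sub_nonneg.2 this
    rw [max_eq_left h0, Real.rpow_two]
  have hR2M : (j:ℝ) * (M - lb)^2 ≤ rieszMean lam 2 M := by
    have h1 : ∑ k ∈ Finset.range j, (M - lam (k+1))^2 ≤ rieszMean lam 2 M := by
      refine le_trans (Finset.sum_le_sum hterm) ?_
      exact Summable.sum_le_tsum _ (fun k _ => Real.rpow_nonneg (le_max_right _ _) _) hsum
    have hCS : (∑ k ∈ Finset.range j, (M - lam (k+1))) ^ 2
        ≤ (Finset.range j).card * ∑ k ∈ Finset.range j, (M - lam (k+1))^2 :=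
      sq_sum_le_card_mul_sum_sq
    have hsum_eq : ∑ k ∈ Finset.range j, (M - lam (k+1)) = (j:ℝ) * (M - lb) := by
      rw [Finset.sum_sub_distrib, Finset.sum_const, Finset.card_range, nsmul_eq_mul,
        mul_sub]
      congr 1
      have : ∑ k ∈ Finset.range j, lam (k+1) = ∑ ℓ ∈ Finset.Icc 1 j, lam ℓ := by
        rw [← Finset.Ico_add_one_right_eq_Icc, Finset.sum_Ico_eq_sum_range]
        simp [add_comm]
      rw [this, hlb, eigAvg, mul_div_cancel₀ _ (ne_of_gt hj')]
    rw [hsum_eq, Finset.card_range] at hCS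
    have : (j:ℝ) * ((j:ℝ) * (M - lb)^2) ≤ (j:ℝ) * ∑ k ∈ Finset.range j, (M - lam (k+1))^2 := by
      calc (j:ℝ) * ((j:ℝ) * (M - lb)^2) = ((j:ℝ) * (M - lb))^2 := by ring
        _ ≤ _ := hCS
    have h2 := le_of_mul_le_mul_left this hj'
    linarith
  -- monotonicity step
  have hmonostep : rieszMean lam 2 M / M ^ (2 + (d:ℝ)/2)
      ≤ rieszMean lam 2 z / z ^ (2 + (d:ℝ)/2) :=
    hmonoR (Set.mem_Ici.2 hl1M) (Set.mem_Ici.2 hl1z) hz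
  -- now combine
  have hR1z := hdiff1 z hl1z
  have hNz := hdiff0 z hl1z
  have hcd : (0:ℝ) < 1 + (d:ℝ)/4 := by positivity
  have hR2z_nonneg : 0 ≤ rieszMean lam 2 z :=
    tsum_nonneg (fun k => Real.rpow_nonneg (le_max_right _ _) _)
  have step1 : (1 + (d:ℝ)/4)^2 * rieszMean lam 2 z / z^2 ≤ countingFn lam z := by
    have h1 : (1 + (d:ℝ)/4) * ((1 + (d:ℝ)/4) * rieszMean lam 2 z / z) / z
        ≤ (1 + (d:ℝ)/4) * rieszMean lam 1 z / z := by
      exact div_le_div_of_nonneg_right (mul_le_mul_of_nonneg_left hR1z hcd.le) hzpos.le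
    have := h1.trans hNz
    calc (1 + (d:ℝ)/4)^2 * rieszMean lam 2 z / z^2
        = (1 + (d:ℝ)/4) * ((1 + (d:ℝ)/4) * rieszMean lam 2 z / z) / z := by
          field_simp
      _ ≤ countingFn lam z := this
  -- rpow algebra
  have hzsplit : z ^ (2 + (d:ℝ)/2) = z^2 * z ^ ((d:ℝ)/2) := by
    rw [Real.rpow_add hzpos, Real.rpow_two]
  have hMsplit : M ^ (2 + (d:ℝ)/2) = M^2 * M ^ ((d:ℝ)/2) := by
    rw [Real.rpow_add hMpos, Real.rpow_two]
  have hzd : (0:ℝ) < z ^ ((d:ℝ)/2) := Real.rpow_pos_of_pos hzpos _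
  have hMd : (0:ℝ) < M ^ ((d:ℝ)/2) := Real.rpow_pos_of_pos hMpos _
  -- R2(z)/z^2 ≥ (R2(M)/M^{2+d/2}) * z^{d/2}
  have step2 : rieszMean lam 2 M / M ^ (2 + (d:ℝ)/2) * z ^ ((d:ℝ)/2)
      ≤ rieszMean lam 2 z / z^2 := by
    have := mul_le_mul_of_nonneg_right hmonostep hzd.le
    calc rieszMean lam 2 M / M ^ (2 + (d:ℝ)/2) * z ^ ((d:ℝ)/2)
        ≤ rieszMean lam 2 z / z ^ (2 + (d:ℝ)/2) * z ^ ((d:ℝ)/2) := this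
      _ = rieszMean lam 2 z / z^2 := by
          rw [hzsplit]; field_simp
  -- key algebraic identity: (1+d/4)^2 * (j*(M-lb)^2) / M^2 = j
  have hMlb : M - lb = 4 / (d:ℝ) * lb := by rw [hM]; ring
  have hkey : (1 + (d:ℝ)/4)^2 * ((j:ℝ) * (M - lb)^2) / M^2 = (j:ℝ) := by
    rw [hMlb, hM]
    have hd0 : (d:ℝ) ≠ 0 := ne_of_gt hd'
    have hlb0 : lb ≠ 0 := ne_of_gt hlbpos
    field_simp
    ring
  -- final chain
  have final : (j:ℝ) * z ^ ((d:ℝ)/2) / M ^ ((d:ℝ)/2) ≤ countingFn lam z := by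
    have h3 : (1 + (d:ℝ)/4)^2 * (rieszMean lam 2 M / M ^ (2 + (d:ℝ)/2) * z ^ ((d:ℝ)/2))
        ≤ (1 + (d:ℝ)/4)^2 * rieszMean lam 2 z / z^2 := by
      rw [mul_div_assoc]
      exact mul_le_mul_of_nonneg_left step2 (by positivity)
    have h4 : (1 + (d:ℝ)/4)^2 * (((j:ℝ) * (M - lb)^2) / M ^ (2 + (d:ℝ)/2) * z ^ ((d:ℝ)/2))
        ≤ (1 + (d:ℝ)/4)^2 * (rieszMean lam 2 M / M ^ (2 + (d:ℝ)/2) * z ^ ((d:ℝ)/2)) := by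
      apply mul_le_mul_of_nonneg_left _ (by positivity)
      apply mul_le_mul_of_nonneg_right _ hzd.le
      exact div_le_div_of_nonneg_right hR2M (Real.rpow_pos_of_pos hMpos _).le
    have h5 : (1 + (d:ℝ)/4)^2 * (((j:ℝ) * (M - lb)^2) / M ^ (2 + (d:ℝ)/2) * z ^ ((d:ℝ)/2))
        = (j:ℝ) * z ^ ((d:ℝ)/2) / M ^ ((d:ℝ)/2) := by
      calc (1 + (d:ℝ)/4)^2 * (((j:ℝ) * (M - lb)^2) / M ^ (2 + (d:ℝ)/2) * z ^ ((d:ℝ)/2))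
          = ((1 + (d:ℝ)/4)^2 * ((j:ℝ) * (M - lb)^2) / M^2) * (z ^ ((d:ℝ)/2) / M ^ ((d:ℝ)/2)) := by
            rw [hMsplit]; field_simp
        _ = (j:ℝ) * (z ^ ((d:ℝ)/2) / M ^ ((d:ℝ)/2)) := by rw [hkey]
        _ = (j:ℝ) * z ^ ((d:ℝ)/2) / M ^ ((d:ℝ)/2) := by ring
    linarith [h3, h4, step1, h5 ▸ h4]
  -- rewrite goal
  have hgoal : (j:ℝ) * (z / M) ^ ((d:ℝ)/2) = (j:ℝ) * z ^ ((d:ℝ)/2) / M ^ ((d:ℝ)/2) := by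
    rw [Real.div_rpow hzpos.le hMpos.le, mul_div_assoc]
  rw [ge_iff_le, hgoal]
  exact final
end

section
/- Let d be a positive integer, let j ≥ 1 be an integer, and let λ : ℕ → ℝ (indexed from 1) be nondecreasing with λ_1 > 0. Suppose that for every z ≥ (1 + 4/d)·λ̄_j one has N(z) ≥ j · ( z / ((1 + 4/d)·λ̄_j) )^{d/2}. Then for every integer k ≥ j, λ_{k+1} ≤ (1 + 4/d) · (k/j)^{2/d} · λ̄_j. -/
open Real Filter

/-- Inequality (2.29) of Corollary 7: from the counting-function bound (2.28),
for every `k ≥ j`, `λ_{k+1} ≤ (1 + 4/d) (k/j)^(2/d) λ̄_j`. -/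
theorem eigenvalue_ratio_bound_avg (d : ℕ) (hd : 0 < d) (j : ℕ) (hj : 1 ≤ j)
    (lam : ℕ → ℝ)
    (hmono : ∀ k : ℕ, 1 ≤ k → lam k ≤ lam (k + 1))
    (hpos : 0 < lam 1)
    (hcount : ∀ z : ℝ, (1 + 4 / (d : ℝ)) * eigAvg lam j ≤ z →
      countingFn lam z ≥
        (j : ℝ) * (z / ((1 + 4 / (d : ℝ)) * eigAvg lam j)) ^ ((d : ℝ) / 2)) :
    ∀ k : ℕ, j ≤ k →
      lam (k + 1) ≤
        (1 + 4 / (d : ℝ)) * ((k : ℝ) / (j : ℝ)) ^ (2 / (d : ℝ)) * eigAvg lam j := by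
  have hd' : (0:ℝ) < d := by exact_mod_cast hd
  -- monotonicity
  have mono : ∀ a b : ℕ, 1 ≤ a → a ≤ b → lam a ≤ lam b := by
    intro a b ha hab
    induction b with
    | zero => exact absurd hab (by omega)
    | succ n ih =>
      rcases Nat.lt_or_ge a (n+1) with h | h
      · have hn : 1 ≤ n := by omega
        exact le_trans (ih (by omega)) (hmono n hn)
      · have : a = n + 1 := by omega
        simp [this]
  have hlampos : ∀ a : ℕ, 1 ≤ a → 0 < lam a := fun a ha =>
    lt_of_lt_of_le hpos (mono 1 a le_rfl ha)
  have hj' : (0:ℝ) < j := by exact_mod_cast hj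
  have havg : 0 < eigAvg lam j := by
    apply div_pos _ hj'
    apply Finset.sum_pos
    · intro i hi
      exact hlampos i (Finset.mem_Icc.mp hi).1
    · exact ⟨1, Finset.mem_Icc.mpr ⟨le_rfl, hj⟩⟩
  set B := (1 + 4 / (d : ℝ)) * eigAvg lam j with hBdef
  have hB : 0 < B := by
    apply mul_pos _ havg
    positivity
  intro k hk
  by_contra hcon
  push_neg at hcon
  set r : ℝ := ((k : ℝ) / (j : ℝ)) ^ (2 / (d : ℝ)) with hrdef
  have hk1 : (1:ℝ) ≤ (k : ℝ) / j := by
    rw [le_div_iff₀ hj']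
    simpa using (by exact_mod_cast hk : (j:ℝ) ≤ k)
  have hr1 : (1:ℝ) ≤ r := Real.one_le_rpow hk1 (by positivity)
  have hz : lam (k+1) > B * r := by
    have : (1 + 4 / (d : ℝ)) * r * eigAvg lam j = B * r := by ring
    linarith [hcon, this.symm ▸ hcon]
  have hzB : B ≤ B * r := le_mul_of_one_le_right hB.le hr1
  have hBlam : B ≤ lam (k+1) := le_trans hzB hz.le
  have hc := hcount (lam (k+1)) hBlam
  -- the key computation: j * (B*r/B)^(d/2) = k
  have hkey : (j : ℝ) * ((B * r) / B) ^ ((d:ℝ)/2) = k := by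
    have hBne : B ≠ 0 := hB.ne'
    rw [mul_div_cancel_left₀ r hBne, hrdef,
      ← Real.rpow_mul (by positivity : (0:ℝ) ≤ (k:ℝ)/j)]
    have : 2 / (d:ℝ) * ((d:ℝ)/2) = 1 := by field_simp
    rw [this, Real.rpow_one]
    field_simp
  -- strict monotonicity of rpow
  have hstrict : ((B * r) / B) ^ ((d:ℝ)/2) < (lam (k+1) / B) ^ ((d:ℝ)/2) := by
    apply Real.rpow_lt_rpow (by positivity)
    · gcongr
    · positivity
  have hlower : (k : ℝ) < countingFn lam (lam (k+1)) := by
    calc (k:ℝ) = (j : ℝ) * ((B * r) / B) ^ ((d:ℝ)/2) := hkey.symm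
    _ < (j : ℝ) * (lam (k+1) / B) ^ ((d:ℝ)/2) := by
        apply mul_lt_mul_of_pos_left hstrict hj'
    _ ≤ countingFn lam (lam (k+1)) := hc
  -- upper bound: countingFn ≤ k
  have hupper : countingFn lam (lam (k+1)) ≤ (k : ℝ) := by
    have hsub : {ℓ : ℕ | 1 ≤ ℓ ∧ lam ℓ < lam (k+1)} ⊆ Set.Icc 1 k := by
      intro ℓ hℓ
      obtain ⟨h1, h2⟩ := hℓ
      refine ⟨h1, ?_⟩
      by_contra hgt
      push_neg at hgt
      exact absurd (mono (k+1) ℓ (by omega) (by omega)) (by linarith)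
    have hcard : Nat.card {ℓ : ℕ // 1 ≤ ℓ ∧ lam ℓ < lam (k+1)} ≤ k := by
      have h1 := Set.ncard_le_ncard hsub (Set.finite_Icc 1 k)
      have h2 : (Set.Icc 1 k).ncard = k := by
        rw [← Finset.coe_Icc, Set.ncard_coe_finset, Nat.card_Icc]; omega
      calc Nat.card {ℓ : ℕ // 1 ≤ ℓ ∧ lam ℓ < lam (k+1)}
          = {ℓ : ℕ | 1 ≤ ℓ ∧ lam ℓ < lam (k+1)}.ncard := Nat.card_coe_set_eq _
        _ ≤ (Set.Icc 1 k).ncard := h1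
        _ = k := h2
    unfold countingFn
    exact_mod_cast hcard
  linarith
end

section
/- Let λ : ℕ → ℝ (indexed from 1) be nondecreasing with λ_k → ∞, let σ > 1 be real, and let z be real. Then R_{σ−1}(z)^σ ≤ N(z) · R_σ(z)^{σ−1}. -/
open Real Filter

/-- Inequality (2.23): `R_{σ-1}(z)^σ ≤ N(z) · R_σ(z)^(σ-1)`, a consequence of
Hölder's inequality. -/
theorem rieszMean_holder_counting (lam : ℕ → ℝ)
    (hmono : ∀ k : ℕ, 1 ≤ k → lam k ≤ lam (k + 1))
    (htend : Tendsto lam atTop atTop)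
    (σ : ℝ) (hσ : 1 < σ) (z : ℝ) :
    rieszMean lam (σ - 1) z ^ σ ≤ countingFn lam z * rieszMean lam σ z ^ (σ - 1) := by
  obtain ⟨M, hM⟩ := (htend.eventually_ge_atTop z).exists_forall_of_atTop
  set a : ℕ → ℝ := fun k => max (z - lam (k + 1)) 0 with ha
  have ha0 : ∀ k, 0 ≤ a k := fun k => le_max_right _ _
  set s : Finset ℕ := (Finset.range M).filter (fun k => lam (k + 1) < z) with hs
  have hmem : ∀ k, k ∈ s ↔ lam (k + 1) < z := by
    intro k
    simp only [hs, Finset.mem_filter, Finset.mem_range]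
    constructor
    · exact fun h => h.2
    · intro h
      refine ⟨?_, h⟩
      by_contra hk
      push_neg at hk
      exact absurd (hM (k + 1) (le_trans hk (Nat.le_succ k))) (not_le.mpr h)
  have hzero : ∀ k, k ∉ s → a k = 0 := by
    intro k hk
    have hz : z ≤ lam (k + 1) := not_lt.mp (fun h => hk ((hmem k).mpr h))
    simp only [ha]
    exact max_eq_right (by linarith)
  have hsum : ∀ p : ℝ, p ≠ 0 → rieszMean lam p z = ∑ k ∈ s, a k ^ p := by
    intro p hp
    refine tsum_eq_sum (fun k hk => ?_)
    show a k ^ p = 0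
    rw [hzero k hk, Real.zero_rpow hp]
  -- counting function equals card of s
  have hcount : countingFn lam z = (s.card : ℝ) := by
    have himg : (Finset.Icc 1 M).filter (fun k => lam k < z) = s.image (· + 1) := by
      ext k
      simp only [Finset.mem_filter, Finset.mem_Icc, Finset.mem_image]
      constructor
      · rintro ⟨⟨h1, _⟩, hlt⟩
        have hk1 : k - 1 + 1 = k := by omega
        exact ⟨k - 1, (hmem _).mpr (by rw [hk1]; exact hlt), hk1⟩
      · rintro ⟨j, hj, rfl⟩
        have hlt := (hmem j).mp hj
        refine ⟨⟨Nat.succ_le_succ (Nat.zero_le j), ?_⟩, hlt⟩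
        by_contra hk
        push_neg at hk
        exact absurd (hM (j + 1) hk.le) (not_le.mpr hlt)
    have hsetsub : {k : ℕ | 1 ≤ k ∧ lam k < z} =
        ↑((Finset.Icc 1 M).filter (fun k => lam k < z)) := by
      ext k
      simp only [Set.mem_setOf_eq, Finset.coe_filter, Finset.mem_Icc]
      constructor
      · rintro ⟨h1, hlt⟩
        refine ⟨⟨h1, ?_⟩, hlt⟩
        by_contra hk
        push_neg at hk
        exact absurd (hM k hk.le) (not_le.mpr hlt)
      · rintro ⟨⟨h1, _⟩, hlt⟩; exact ⟨h1, hlt⟩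
    have : countingFn lam z =
        (((Finset.Icc 1 M).filter (fun k => lam k < z)).card : ℝ) := by
      unfold countingFn
      have : {k : ℕ // 1 ≤ k ∧ lam k < z} = {k : ℕ // k ∈ {k : ℕ | 1 ≤ k ∧ lam k < z}} := rfl
      rw [this, Nat.card_coe_set_eq, hsetsub, Set.ncard_coe_finset]
    rw [this, himg, Finset.card_image_of_injective _ (add_left_injective 1)]
  have hσ1 : (0:ℝ) < σ - 1 := by linarith
  have hσ0 : (0:ℝ) < σ := by linarith
  set p : ℝ := σ / (σ - 1) with hp
  have hp1 : 1 ≤ p := (one_le_div hσ1).mpr (by linarith)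
  have hhold : (∑ k ∈ s, a k ^ (σ - 1)) ^ p ≤
      (s.card : ℝ) ^ (p - 1) * ∑ k ∈ s, (a k ^ (σ - 1)) ^ p :=
    Real.rpow_sum_le_const_mul_sum_rpow_of_nonneg s hp1 (fun i _ => Real.rpow_nonneg (ha0 i) _)
  have hpow : ∀ k, (a k ^ (σ - 1)) ^ p = a k ^ σ := by
    intro k
    rw [← Real.rpow_mul (ha0 k)]
    congr 1
    rw [hp]; field_simp; try ring
  rw [Finset.sum_congr rfl (fun i _ => hpow i)] at hhold
  set S1 : ℝ := ∑ k ∈ s, a k ^ (σ - 1) with hS1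
  set S2 : ℝ := ∑ k ∈ s, a k ^ σ with hS2
  have hS1nn : 0 ≤ S1 := Finset.sum_nonneg fun i _ => Real.rpow_nonneg (ha0 i) _
  have hS2nn : 0 ≤ S2 := Finset.sum_nonneg fun i _ => Real.rpow_nonneg (ha0 i) _
  have hcardnn : (0:ℝ) ≤ (s.card : ℝ) ^ (p - 1) := Real.rpow_nonneg (Nat.cast_nonneg _) _
  have key : S1 ^ σ ≤ (s.card : ℝ) * S2 ^ (σ - 1) := by
    have h2 : (S1 ^ p) ^ (σ - 1) ≤ ((s.card : ℝ) ^ (p - 1) * S2) ^ (σ - 1) :=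
      Real.rpow_le_rpow (Real.rpow_nonneg hS1nn _) hhold hσ1.le
    rw [← Real.rpow_mul hS1nn, Real.mul_rpow hcardnn hS2nn,
      ← Real.rpow_mul (Nat.cast_nonneg _)] at h2
    have e1 : p * (σ - 1) = σ := by rw [hp]; field_simp
    have e2 : (p - 1) * (σ - 1) = 1 := by rw [hp]; field_simp; try ring
    rw [e1, e2, Real.rpow_one] at h2
    exact h2
  rw [hsum (σ - 1) (by linarith), hsum σ (by linarith), hcount]
  exact key
end

section
/- Let d be a positive integer, let σ ≥ 2 be real, and let λ : ℕ → ℝ (indexed from 1) be nondecreasing with λ_1 > 0 and λ_k → ∞. Suppose that for all z ≥ λ_1, R_{σ−1}(z) ≥ (1 + d/(2σ)) · R_σ(z)/z. Then for all z ≥ λ_1, N(z) · z^σ ≥ ((d + 2σ)/(2σ))^σ · R_σ(z). -/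
open Real Filter

/-- Inequality (2.24): from the difference inequality (2.3), for all `z ≥ λ_1` and
`σ ≥ 2`, `N(z) z^σ ≥ ((d + 2σ)/(2σ))^σ R_σ(z)`. -/
theorem counting_lower_bound_general_sigma (d : ℕ) (hd : 0 < d)
    (σ : ℝ) (hσ : 2 ≤ σ) (lam : ℕ → ℝ)
    (hmono : ∀ k : ℕ, 1 ≤ k → lam k ≤ lam (k + 1))
    (hpos : 0 < lam 1)
    (htend : Tendsto lam atTop atTop)
    (hdiff : ∀ z : ℝ, lam 1 ≤ z →
      rieszMean lam (σ - 1) z ≥ (1 + (d : ℝ) / (2 * σ)) * rieszMean lam σ z / z) :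
    ∀ z : ℝ, lam 1 ≤ z →
      countingFn lam z * z ^ σ ≥
        (((d : ℝ) + 2 * σ) / (2 * σ)) ^ σ * rieszMean lam σ z := by
  intro z hz
  have hσ0 : (0 : ℝ) < σ := by linarith
  have hσ1 : (0 : ℝ) < σ - 1 := by linarith
  have hz0 : 0 < z := lt_of_lt_of_le hpos hz
  -- finiteness
  obtain ⟨M, hM⟩ : ∃ M : ℕ, ∀ k, M ≤ k → z ≤ lam k :=
    eventually_atTop.mp (htend.eventually_ge_atTop z)
  set f : ℕ → ℝ := fun k => max (z - lam (k + 1)) 0 with hf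
  have hf0 : ∀ k, 0 ≤ f k := fun k => le_max_right _ _
  set F : Finset ℕ := (Finset.range M).filter (fun k => lam (k + 1) < z) with hF
  have hfout : ∀ k ∉ F, f k = 0 := by
    intro k hk
    have : ¬ lam (k + 1) < z := by
      by_cases hkM : k < M
      · intro h; exact hk (Finset.mem_filter.mpr ⟨Finset.mem_range.mpr hkM, h⟩)
      · exact not_lt.mpr (hM (k + 1) (by omega))
    simp [hf, max_eq_right, sub_nonpos.mpr (not_lt.mp this)]
  have hsum : ∀ τ : ℝ, τ ≠ 0 → rieszMean lam τ z = ∑ k ∈ F, f k ^ τ := by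
    intro τ hτ
    refine tsum_eq_sum (fun k hk => ?_)
    show f k ^ τ = 0
    rw [hfout k hk, Real.zero_rpow hτ]
  -- counting function equals card F
  have hcount : countingFn lam z = (F.card : ℝ) := by
    unfold countingFn
    congr 1
    rw [← Nat.card_eq_finsetCard F]
    apply Nat.card_congr
    have hmem : ∀ j : ℕ, 1 ≤ j → lam j < z → j - 1 ∈ F := by
      intro j hj1 hjz
      have hjM : j < M := by
        by_contra h
        exact absurd hjz (not_lt.mpr (hM j (by omega)))
      have hj : j - 1 + 1 = j := by omega
      refine Finset.mem_filter.mpr ⟨Finset.mem_range.mpr (by omega), ?_⟩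
      rw [hj]; exact hjz
    refine ⟨fun j => ⟨j.1 - 1, hmem j.1 j.2.1 j.2.2⟩,
      fun k => ⟨k.1 + 1, by omega, (Finset.mem_filter.mp k.2).2⟩, ?_, ?_⟩
    · rintro ⟨j, hj1, hjz⟩; simp only [Subtype.mk.injEq]; omega
    · rintro ⟨k, hk⟩; simp only [Subtype.mk.injEq]; omega
  set A := rieszMean lam σ z with hA
  set B := rieszMean lam (σ - 1) z with hB
  set n : ℝ := (F.card : ℝ) with hn
  have hn0 : 0 ≤ n := Nat.cast_nonneg _
  have hA0 : 0 ≤ A := by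
    rw [hA, hsum σ hσ0.ne']
    exact Finset.sum_nonneg fun k _ => Real.rpow_nonneg (hf0 k) σ
  set C : ℝ := ((d : ℝ) + 2 * σ) / (2 * σ) with hC
  have hC1 : (1 : ℝ) < C := by
    rw [hC, lt_div_iff₀ (by linarith)]
    have : (0:ℝ) < d := by exact_mod_cast hd
    linarith
  have hC0 : 0 < C := lt_trans one_pos hC1
  have hCeq : (1 : ℝ) + (d : ℝ) / (2 * σ) = C := by
    rw [hC]; field_simp; ring
  -- Hölder
  have hpq : Real.HolderConjugate (σ / (σ - 1)) σ := by
    rw [Real.holderConjugate_iff]; constructor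
    · rw [lt_div_iff₀ hσ1]; linarith
    · field_simp; ring
  have holder : B ≤ A ^ ((σ - 1) / σ) * n ^ (1 / σ) := by
    have h := Real.inner_le_Lp_mul_Lq_of_nonneg (s := F)
      (f := fun k => f k ^ (σ - 1)) (g := fun _ => (1 : ℝ)) hpq
      (fun k _ => Real.rpow_nonneg (hf0 k) _) (fun k _ => zero_le_one)
    simp only [mul_one, Real.one_rpow] at h
    have e1 : ∀ k ∈ F, (f k ^ (σ - 1)) ^ (σ / (σ - 1)) = f k ^ σ := by
      intro k _
      rw [← Real.rpow_mul (hf0 k)]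
      congr 1
      field_simp
    rw [Finset.sum_congr rfl e1, Finset.sum_const, nsmul_eq_mul, mul_one] at h
    have e2 : 1 / (σ / (σ - 1)) = (σ - 1) / σ := by
      rw [one_div_div]
    rw [e2] at h
    calc B = ∑ k ∈ F, f k ^ (σ - 1) := hsum _ hσ1.ne'
      _ ≤ _ := h
      _ = A ^ ((σ - 1) / σ) * n ^ (1 / σ) := by rw [hA, hsum σ hσ0.ne']
  -- combine
  rw [hcount, ge_iff_le]
  rcases eq_or_lt_of_le hA0 with hA0' | hApos
  · rw [← hA0', mul_zero]
    positivity
  · have hd2 : C * A / z ≤ B := by rw [← hCeq]; exact hdiff z hz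
    have key : C * A ^ (1 / σ) / z ≤ n ^ (1 / σ) := by
      have hsplit : A = A ^ ((σ - 1) / σ) * A ^ (1 / σ) := by
        rw [← Real.rpow_add hApos]
        rw [← add_div, sub_add_cancel, div_self hσ0.ne', Real.rpow_one]
      have hApow : 0 < A ^ ((σ - 1) / σ) := Real.rpow_pos_of_pos hApos _
      have h2 : A ^ ((σ - 1) / σ) * (C * A ^ (1 / σ) / z) ≤
          A ^ ((σ - 1) / σ) * n ^ (1 / σ) := by
        calc A ^ ((σ - 1) / σ) * (C * A ^ (1 / σ) / z)
            = C * (A ^ ((σ - 1) / σ) * A ^ (1 / σ)) / z := by ring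
          _ = C * A / z := by rw [← hsplit]
          _ ≤ B := hd2
          _ ≤ A ^ ((σ - 1) / σ) * n ^ (1 / σ) := holder
      exact le_of_mul_le_mul_left h2 hApow
    have hlhs0 : 0 ≤ C * A ^ (1 / σ) / z :=
      div_nonneg (mul_nonneg hC0.le (Real.rpow_nonneg hA0 _)) hz0.le
    have key2 := Real.rpow_le_rpow hlhs0 key hσ0.le
    have hns : (n ^ (1 / σ)) ^ σ = n := by
      rw [← Real.rpow_mul hn0, one_div_mul_cancel hσ0.ne', Real.rpow_one]
    have hAs : (A ^ (1 / σ)) ^ σ = A := by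
      rw [← Real.rpow_mul hA0, one_div_mul_cancel hσ0.ne', Real.rpow_one]
    rw [hns, Real.div_rpow (mul_nonneg hC0.le (Real.rpow_nonneg hA0 _)) hz0.le,
      Real.mul_rpow hC0.le (Real.rpow_nonneg hA0 _), hAs,
      div_le_iff₀ (Real.rpow_pos_of_pos hz0 σ)] at key2
    exact key2
end

section
/- Let d be a positive integer and let λ : ℕ → ℝ (indexed from 1) be nondecreasing with λ_1 > 0. Suppose that for every integer j ≥ 1 one has λ_{j+1} ≤ (1 + 4/d) · j^{2/d} · λ_1. Then for every integer k ≥ 1, λ̄_k ≤ ((d + 4)/(d + 2)) · k^{2/d} · λ_1. -/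
open Real Filter

/-- Bernoulli-type step: for `x ≥ 1` and `p = 1 + 2/D`, `p·x^(2/D) ≤ (x+1)^p - x^p`. -/
lemma bern_step (D : ℝ) (hD : 0 < D) (x : ℝ) (hx : 1 ≤ x) :
    (1 + 2 / D) * x ^ (2 / D) ≤ (x + 1) ^ (1 + 2 / D) - x ^ (1 + 2 / D) := by
  have hx0 : (0:ℝ) < x := lt_of_lt_of_le one_pos hx
  have hp : (1:ℝ) ≤ 1 + 2 / D := by
    have : 0 < 2 / D := by positivity
    linarith
  have h := one_add_mul_self_le_rpow_one_add (s := 1/x)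
    (by linarith [one_div_nonneg.2 hx0.le]) hp
  have hmul : x ^ (1 + 2 / D) * (1 + (1 + 2 / D) * (1/x)) ≤
      x ^ (1 + 2 / D) * (1 + 1/x) ^ (1 + 2 / D) := by
    apply mul_le_mul_of_nonneg_left h (by positivity)
  have h1 : x ^ (1 + 2 / D) * (1 + 1/x) ^ (1 + 2 / D) = (x + 1) ^ (1 + 2 / D) := by
    rw [← Real.mul_rpow (le_of_lt hx0) (by positivity)]
    congr 1
    field_simp
  have h2 : x ^ (1 + 2 / D) * (1 + (1 + 2 / D) * (1/x)) =
      x ^ (1 + 2 / D) + (1 + 2 / D) * x ^ (2 / D) := by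
    have hxp : x ^ (1 + 2 / D) = x * x ^ (2 / D) := by
      rw [Real.rpow_add hx0, Real.rpow_one]
    rw [hxp]; field_simp
  rw [h1, h2] at hmul
  linarith

/-- Telescoping Riemann-sum estimate: `(1+2/D) Σ_{j=1}^{k-1} j^(2/D) ≤ k^(1+2/D) - 1`. -/
lemma telescope_sum (D : ℝ) (hD : 0 < D) :
    ∀ k : ℕ, 1 ≤ k →
      (1 + 2 / D) * ∑ j ∈ Finset.Ico 1 k, (j : ℝ) ^ (2 / D) ≤ (k : ℝ) ^ (1 + 2 / D) - 1 := by
  intro k hk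
  induction k with
  | zero => omega
  | succ n ih =>
    rcases Nat.eq_or_lt_of_le hk with h1 | h1
    · simp [← h1, Finset.Ico_self]
    · have hn : 1 ≤ n := by omega
      have ihn := ih hn
      rw [Finset.sum_Ico_succ_top hn, mul_add]
      have hb := bern_step D hD (n : ℝ) (by exact_mod_cast hn)
      have hcast : ((n : ℝ) + 1) = ((n + 1 : ℕ) : ℝ) := by push_cast; ring
      rw [hcast] at hb
      linarith

/-- Inequality (4.2): the averaged Cheng–Yang bound. If `λ_{j+1} ≤ (1 + 4/d) j^(2/d) λ_1`
for all `j ≥ 1`, then `λ̄_k ≤ ((d+4)/(d+2)) k^(2/d) λ_1` for all `k ≥ 1`. -/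
theorem averaged_chengYang_bound (d : ℕ) (hd : 0 < d) (lam : ℕ → ℝ)
    (hmono : ∀ k : ℕ, 1 ≤ k → lam k ≤ lam (k + 1))
    (hpos : 0 < lam 1)
    (hCY : ∀ j : ℕ, 1 ≤ j →
      lam (j + 1) ≤ (1 + 4 / (d : ℝ)) * (j : ℝ) ^ (2 / (d : ℝ)) * lam 1) :
    ∀ k : ℕ, 1 ≤ k →
      eigAvg lam k ≤
        (((d : ℝ) + 4) / ((d : ℝ) + 2)) * (k : ℝ) ^ (2 / (d : ℝ)) * lam 1 := by
  set D := (d : ℝ) with hDdef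
  have hD : 0 < D := by rw [hDdef]; exact_mod_cast hd
  -- step 1: bound the partial sums using (hCY)
  have sumBound : ∀ k : ℕ, 1 ≤ k →
      ∑ ℓ ∈ Finset.Icc 1 k, lam ℓ ≤
        lam 1 + (1 + 4 / D) * lam 1 * ∑ j ∈ Finset.Ico 1 k, (j : ℝ) ^ (2 / D) := by
    intro k hk
    induction k with
    | zero => omega
    | succ n ih =>
      rcases Nat.eq_or_lt_of_le hk with h1 | h1
      · simp [← h1]
      · have hn : 1 ≤ n := by omega
        have ihn := ih hn
        rw [Finset.sum_Icc_succ_top (by omega : 1 ≤ n + 1), Finset.sum_Ico_succ_top hn,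
          mul_add]
        have := hCY n hn
        nlinarith [Real.rpow_nonneg (by positivity : (0:ℝ) ≤ (n:ℝ)) (2/D), hpos.le]
  intro k hk
  have hk1 : (1:ℝ) ≤ (k:ℝ) := by exact_mod_cast hk
  have hk0 : (0:ℝ) < (k:ℝ) := by linarith
  have hT := telescope_sum D hD k hk
  have hS := sumBound k hk
  have hp2 : (0:ℝ) < 1 + 2 / D := by positivity
  have hsum : ∑ j ∈ Finset.Ico 1 k, (j : ℝ) ^ (2 / D) ≤
      ((k : ℝ) ^ (1 + 2 / D) - 1) / (1 + 2 / D) := by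
    rw [le_div_iff₀ hp2]; linarith
  have hC : (1 + 4 / D) / (1 + 2 / D) = (D + 4) / (D + 2) := by
    field_simp
  have hkp : (k : ℝ) ^ (1 + 2 / D) = (k : ℝ) * (k : ℝ) ^ (2 / D) := by
    rw [Real.rpow_add hk0, Real.rpow_one]
  have hCge1 : (1:ℝ) ≤ (D + 4) / (D + 2) := by
    rw [le_div_iff₀ (by linarith)]; linarith
  have key : ∑ ℓ ∈ Finset.Icc 1 k, lam ℓ ≤
      (D + 4) / (D + 2) * (k : ℝ) ^ (1 + 2 / D) * lam 1 := by
    have h2 : (1 + 4 / D) * lam 1 * ∑ j ∈ Finset.Ico 1 k, (j : ℝ) ^ (2 / D) ≤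
        (1 + 4 / D) * lam 1 * (((k : ℝ) ^ (1 + 2 / D) - 1) / (1 + 2 / D)) := by
      apply mul_le_mul_of_nonneg_left hsum (by positivity)
    have h3 : (1 + 4 / D) * lam 1 * (((k : ℝ) ^ (1 + 2 / D) - 1) / (1 + 2 / D)) =
        (D + 4) / (D + 2) * ((k : ℝ) ^ (1 + 2 / D) - 1) * lam 1 := by
      rw [← hC]; field_simp
    rw [h3] at h2
    nlinarith [Real.rpow_nonneg hk0.le (1 + 2/D)]
  rw [eigAvg, div_le_iff₀ hk0]
  calc ∑ ℓ ∈ Finset.Icc 1 k, lam ℓ ≤ (D + 4) / (D + 2) * (k : ℝ) ^ (1 + 2 / D) * lam 1 := key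
    _ = (D + 4) / (D + 2) * (k : ℝ) ^ (2 / D) * lam 1 * (k:ℝ) := by rw [hkp]; ring
end

section
/- For every positive integer d, one has 1 < 2·( (1 + d/4)/(1 + d/2) )^{1 + 2/d} < (d + 4)/(d + 2). -/
open Finset in
lemma key_binom (m : ℕ) : 4 * ((m : ℝ) + 3) ^ (m + 3) < ((m : ℝ) + 5) ^ (m + 3) := by
  set y : ℝ := (m : ℝ) + 3 with hy
  have hy0 : 0 < y := by positivity
  have hc2 : (((m + 3).choose 2 : ℕ) : ℝ) = ((m:ℝ) + 3) * ((m:ℝ) + 2) / 2 := by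
    rw [Nat.cast_choose_two]; push_cast; ring
  have hsub : ({0, 1, 2} : Finset ℕ) ⊆ range (m + 3 + 1) := by
    intro k hk
    simp only [mem_insert, mem_singleton] at hk
    simp only [mem_range]; omega
  have hmono := Finset.sum_le_sum_of_subset_of_nonneg hsub
    (f := fun k => (2:ℝ) ^ k * y ^ (m + 3 - k) * (m + 3).choose k)
    (fun i _ _ => by positivity)
  have hexp : ((m : ℝ) + 5) ^ (m + 3)
      = ∑ k ∈ range (m + 3 + 1), (2:ℝ) ^ k * y ^ (m + 3 - k) * (m + 3).choose k := by
    rw [← add_pow]; rw [hy]; ring_nf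
  have hsum : ∑ k ∈ ({0, 1, 2} : Finset ℕ), (2:ℝ) ^ k * y ^ (m + 3 - k) * (m + 3).choose k
      = y ^ (m + 3) + 2 * y ^ (m + 2) * ((m:ℝ) + 3)
        + 4 * y ^ (m + 1) * (((m:ℝ) + 3) * ((m:ℝ) + 2) / 2) := by
    rw [show ({0, 1, 2} : Finset ℕ) = insert 0 (insert 1 {2}) from rfl,
      Finset.sum_insert (by decide), Finset.sum_insert (by decide), Finset.sum_singleton]
    rw [hc2]
    push_cast
    norm_num
    ring
  rw [hexp]
  refine lt_of_lt_of_le ?_ hmono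
  rw [hsum]
  have hP : (0:ℝ) < y ^ (m + 1) := by positivity
  have h3 : y ^ (m + 3) = y ^ (m + 1) * y ^ 2 := by ring
  have h2' : y ^ (m + 2) = y ^ (m + 1) * y := by ring
  rw [h3, h2', hy]
  nlinarith [hP, mul_pos hP (by positivity : (0:ℝ) < (m:ℝ)+1)]

/-- Comparison of coefficients from Section 4: for every positive integer `d`,
`1 < 2 ((1 + d/4)/(1 + d/2))^(1 + 2/d) < (d + 4)/(d + 2)` (real powers). -/
theorem coefficient_comparison (d : ℕ) (hd : 0 < d) :
    1 < 2 * ((1 + (d : ℝ) / 4) / (1 + (d : ℝ) / 2)) ^ (1 + 2 / (d : ℝ)) ∧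
      2 * ((1 + (d : ℝ) / 4) / (1 + (d : ℝ) / 2)) ^ (1 + 2 / (d : ℝ)) <
        ((d : ℝ) + 4) / ((d : ℝ) + 2) := by
  have hd0 : (0:ℝ) < d := by exact_mod_cast hd
  set b : ℝ := ((d:ℝ) + 4) / (2 * ((d:ℝ) + 2)) with hbdef
  have hbeq : (1 + (d : ℝ) / 4) / (1 + (d : ℝ) / 2) = b := by
    rw [hbdef]; field_simp; ring
  have hb0 : 0 < b := by positivity
  have hb1 : b < 1 := by
    rw [hbdef, div_lt_one (by positivity)]; linarith
  -- key polynomial inequality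
  obtain ⟨m, rfl⟩ : ∃ m, d = m + 1 := ⟨d - 1, by omega⟩
  set d' : ℕ := m + 1 with hd'
  have hkey : 4 * ((d':ℝ) + 2) ^ (d' + 2) < ((d':ℝ) + 4) ^ (d' + 2) := by
    have h := key_binom m
    have e1 : ((d':ℝ) + 2) = (m:ℝ) + 3 := by push_cast [hd']; ring
    have e2 : ((d':ℝ) + 4) = (m:ℝ) + 5 := by push_cast [hd']; ring
    have e3 : d' + 2 = m + 3 := by omega
    rw [e1, e2, e3]; exact h
  have hpow : (1/2 : ℝ) ^ d' < b ^ (d' + 2) := by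
    have hA : b ^ (d'+2) = ((d':ℝ)+4)^(d'+2) / (2^(d'+2) * ((d':ℝ)+2)^(d'+2)) := by
      rw [hbdef, div_pow, mul_pow]
    have hB : (1/2:ℝ)^d' = 1 / 2^d' := by rw [div_pow, one_pow]
    rw [hA, hB, div_lt_div_iff₀ (by positivity) (by positivity)]
    have h2 : (2:ℝ)^(d'+2) = 4 * 2^d' := by rw [pow_add]; ring
    rw [h2]
    have h2d : (0:ℝ) < (2:ℝ)^d' := by positivity
    nlinarith [hkey, h2d]
  have hexp : (1:ℝ) + 2 / (d':ℝ) = ((d' + 2 : ℕ):ℝ) * (1 / (d':ℝ)) := by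
    have h : (d':ℝ) ≠ 0 := by positivity
    push_cast
    field_simp
  have hdls : (0:ℝ) < 1 / (d':ℝ) := by positivity
  have hbp : b ^ ((1:ℝ) + 2 / (d':ℝ)) = (b ^ (d' + 2)) ^ ((1:ℝ) / (d':ℝ)) := by
    rw [hexp, ← Real.rpow_natCast b (d' + 2), ← Real.rpow_mul hb0.le]
  have h12 : ((1/2:ℝ) ^ d') ^ ((1:ℝ) / (d':ℝ)) = 1/2 := by
    rw [← Real.rpow_natCast (1/2:ℝ) d', ← Real.rpow_mul (by norm_num), mul_one_div,
      div_self (by positivity : (d':ℝ) ≠ 0), Real.rpow_one]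
  have hlow : (1/2 : ℝ) < b ^ ((1:ℝ) + 2 / (d':ℝ)) := by
    rw [hbp, ← h12]
    exact Real.rpow_lt_rpow (by positivity) hpow hdls
  have h2b : 2 * b = ((d':ℝ) + 4) / ((d':ℝ) + 2) := by
    rw [hbdef]; field_simp
  have hfrac : b ^ ((2:ℝ) / (d':ℝ)) < 1 :=
    Real.rpow_lt_one hb0.le hb1 (by positivity)
  have hsplit : b ^ ((1:ℝ) + 2 / (d':ℝ)) = b * b ^ ((2:ℝ) / (d':ℝ)) := by
    rw [Real.rpow_add hb0, Real.rpow_one]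
  constructor
  · rw [hbeq]; linarith
  · rw [hbeq, hsplit, ← h2b]
    calc 2 * (b * b ^ ((2:ℝ) / (d':ℝ))) = (2 * b) * b ^ ((2:ℝ) / (d':ℝ)) := by ring
    _ < (2 * b) * 1 := mul_lt_mul_of_pos_left hfrac (by positivity)
    _ = 2 * b := by ring
end
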